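/- arXiv:1011.6554 — 2 statements merged into one kernel-verified Lean document; each statement's English description precedes it below -/
import Mathlib

section
/- Let T be a forest of order at least 3 such that m(T) ≥ m(T') for every forest T' of the same order. Then T is connected, i.e., T is a tree. -/
namespace PaperMM

open SimpleGraph

/-- `M` is a matching of `G`: a set of edges of `G` that are pairwise disjoint. -/
def IsMatchingSet {V : Type} (G : SimpleGraph V) (M : Set (Sym2 V)) : Prop :=
  M ⊆ G.edgeSet ∧ M.Pairwise fun e f => ∀ v : V, ¬(v ∈ e ∧ v ∈ f)

/-- The matching number `μ(G)`: the maximum cardinality of a matching of `G`. -/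
noncomputable def matchNum {V : Type} (G : SimpleGraph V) : ℕ :=
  sSup {n | ∃ M : Set (Sym2 V), IsMatchingSet G M ∧ M.ncard = n}

/-- The set of maximum matchings of `G`. -/
def MaximumMatchings {V : Type} (G : SimpleGraph V) : Set (Set (Sym2 V)) :=
  {M | IsMatchingSet G M ∧ M.ncard = matchNum G}

/-- `m(G)`: the number of maximum matchings of `G`. -/
noncomputable def mm {V : Type} (G : SimpleGraph V) : ℕ := (MaximumMatchings G).ncard

/-- The matching `M` covers the vertex `v`. -/
def Covers {V : Type} (M : Set (Sym2 V)) (v : V) : Prop := ∃ e ∈ M, v ∈ e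

/-- `v` is of type A in `G`: some maximum matching of `G` does not cover `v`. -/
def TypeA {V : Type} (G : SimpleGraph V) (v : V) : Prop :=
  ∃ M ∈ MaximumMatchings G, ¬ Covers M v

/-- `v` is of type B in `G`: every maximum matching of `G` covers `v`. -/
def TypeB {V : Type} (G : SimpleGraph V) (v : V) : Prop := ¬ TypeA G v

/-- `G` has a perfect matching. -/
def HasPerfectMatching {V : Type} (G : SimpleGraph V) : Prop :=
  ∃ M : Set (Sym2 V), IsMatchingSet G M ∧ ∀ v, Covers M v

/-- The degree of `v` in `G`. -/
noncomputable def degS {V : Type} (G : SimpleGraph V) (v : V) : ℕ := (G.neighborSet v).ncard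

/-- `G` is an optimal tree: a tree maximising `m` among all trees of the same order. -/
def OptimalTree {V : Type} [Fintype V] (G : SimpleGraph V) : Prop :=
  G.IsTree ∧ ∀ H : SimpleGraph (Fin (Fintype.card V)), H.IsTree → mm H ≤ mm G

/-- The vertex set of the connected component of `s` in `G - st`. -/
def sideSet {V : Type} (G : SimpleGraph V) (s t : V) : Set V :=
  {v | (G.deleteEdges {Sym2.mk s t}).Reachable s v}

/-- The connected component of `s` in `G - st`, as a graph. -/
def sideGraph {V : Type} (G : SimpleGraph V) (s t : V) :
    SimpleGraph (sideSet G s t) :=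
  (G.deleteEdges {Sym2.mk s t}).induce (sideSet G s t)

theorem mem_sideSet_self {V : Type} (G : SimpleGraph V) (s t : V) : s ∈ sideSet G s t :=
  SimpleGraph.Reachable.refl s

/-- The root of the component of `s` in `G - st`, i.e. `s` itself. -/
def sideRoot {V : Type} (G : SimpleGraph V) (s t : V) : sideSet G s t :=
  ⟨s, mem_sideSet_self G s t⟩

/-- `μ(T_s)` where `T_s` is the component of `s` in `G - st`. -/
noncomputable def sideMu {V : Type} (G : SimpleGraph V) (s t : V) : ℕ := matchNum (sideGraph G s t)

/-- `m(T_s)` where `T_s` is the component of `s` in `G - st`. -/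
noncomputable def sideM {V : Type} (G : SimpleGraph V) (s t : V) : ℕ := mm (sideGraph G s t)

/-- `μ(T_s − s)` where `T_s` is the component of `s` in `G - st`. -/
noncomputable def sideMuDel {V : Type} (G : SimpleGraph V) (s t : V) : ℕ :=
  matchNum ((G.deleteEdges {Sym2.mk s t}).induce (sideSet G s t \ {s}))

/-- `m(T_s − s)` where `T_s` is the component of `s` in `G - st`. -/
noncomputable def sideMDel {V : Type} (G : SimpleGraph V) (s t : V) : ℕ :=
  mm ((G.deleteEdges {Sym2.mk s t}).induce (sideSet G s t \ {s}))

/-- A rooted graph: a vertex type, a graph on it, and a root vertex. -/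
structure RGraph : Type 1 where
  V : Type
  G : SimpleGraph V
  root : V

/-- `m(T)` for a rooted graph. -/
noncomputable def RGraph.m (T : RGraph) : ℕ := mm T.G

/-- `m_0(T) = m(T − r)` for a rooted graph with root `r`. -/
noncomputable def RGraph.m0 (T : RGraph) : ℕ := mm (T.G.induce {v | v ≠ T.root})

/-- `m_1(T)`: the number of maximum matchings of `G` covering `r`. -/
noncomputable def mmCover {V : Type} (G : SimpleGraph V) (r : V) : ℕ :=
  {M | M ∈ MaximumMatchings G ∧ Covers M r}.ncard

/-- The order (number of vertices) of a rooted graph. -/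
noncomputable def RGraph.order (T : RGraph) : ℕ := Nat.card T.V

/-- Isomorphism of rooted graphs: a graph isomorphism mapping root to root. -/
def RGraph.RIso (T T' : RGraph) : Prop :=
  ∃ φ : T.G ≃g T'.G, φ T.root = T'.root

/-- The one-vertex rooted tree `L`. -/
def rL : RGraph := ⟨PUnit, ⊥, PUnit.unit⟩

/-- The fork `F`: the root `0` is adjacent to `1`, which is adjacent to the leaves `2`, `3`. -/
def rF : RGraph :=
  ⟨Fin 4, SimpleGraph.fromRel (fun a b => (a = 0 ∧ b = 1) ∨ (a = 1 ∧ b = 2) ∨ (a = 1 ∧ b = 3)), 0⟩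

/-- The rooted tree `B₂*`: a single edge rooted at one endpoint. -/
def rB2 : RGraph := ⟨Fin 2, SimpleGraph.fromRel (fun a b => a = 0 ∧ b = 1), 0⟩

/-- The rooted tree `A₃*`: a path on three vertices rooted at an endpoint. -/
def rA3 : RGraph :=
  ⟨Fin 3, SimpleGraph.fromRel (fun a b => (a = 0 ∧ b = 1) ∨ (a = 1 ∧ b = 2)), 0⟩

/-- The `k`-claw: the star `K_{1,k}` rooted at its center. -/
def claw (k : ℕ) : RGraph :=
  ⟨Fin (k + 1), SimpleGraph.fromRel (fun a b => a = 0 ∧ b ≠ 0), 0⟩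

/-- The chain construction `C`: seven new vertices are added to the rooted tree `T`;
`Sum.inr 0` is the new root `s`, `Sum.inr 1` is the vertex `b` adjacent to `s`, to the new
leaf `Sum.inr 2`, to the root `Sum.inr 3` of a new fork (with center `Sum.inr 4` and leaves
`Sum.inr 5`, `Sum.inr 6`), and to the old root of `T`. -/
def consC (T : RGraph) : RGraph where
  V := T.V ⊕ Fin 7
  G := SimpleGraph.fromRel (fun a b =>
    (∃ x y, T.G.Adj x y ∧ a = Sum.inl x ∧ b = Sum.inl y) ∨
    (a = Sum.inr 0 ∧ b = Sum.inr 1) ∨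
    (a = Sum.inr 1 ∧ b = Sum.inr 2) ∨
    (a = Sum.inr 1 ∧ b = Sum.inr 3) ∨
    (a = Sum.inr 3 ∧ b = Sum.inr 4) ∨
    (a = Sum.inr 4 ∧ b = Sum.inr 5) ∨
    (a = Sum.inr 4 ∧ b = Sum.inr 6) ∨
    (a = Sum.inr 1 ∧ b = Sum.inl T.root))
  root := Sum.inr 0

/-- `hang T S`: the disjoint union of rooted graphs `T` and `S` together with an edge
joining their roots; the root of the result is the root of `T`. -/
def hang (T S : RGraph) : RGraph where
  V := T.V ⊕ S.V
  G := SimpleGraph.fromRel (fun a b =>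
    (∃ x y, T.G.Adj x y ∧ a = Sum.inl x ∧ b = Sum.inl y) ∨
    (∃ x y, S.G.Adj x y ∧ a = Sum.inr x ∧ b = Sum.inr y) ∨
    (a = Sum.inl T.root ∧ b = Sum.inr S.root))
  root := Sum.inl T.root

/-- The rooted subtree of `G` cut off by the edge `st` on the side of `s`, rooted at `s`. -/
def sideRG {V : Type} (G : SimpleGraph V) (s t : V) : RGraph :=
  ⟨sideSet G s t, sideGraph G s t, sideRoot G s t⟩

/-- `y` lies on the path from `x` to the root of `T`. -/
def OnRootPath (T : RGraph) (x y : T.V) : Prop := ∀ p : T.G.Walk x T.root, y ∈ p.support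

/-- The rooted graph `T` contains a `k`-claw: either `T` itself is a `k`-claw, or
there is an edge `xy` of `T` with `y` on the path from `x` to the root such that
the component of `x` in `T − xy`, rooted at `x`, is a `k`-claw. -/
def ContainsClaw (T : RGraph) (k : ℕ) : Prop :=
  T.RIso (claw k) ∨
  ∃ x y : T.V, T.G.Adj x y ∧ OnRootPath T x y ∧ (sideRG T.G x y).RIso (claw k)

/-- The vertex set of the branch of the rooted graph `(G, r)` containing the
neighbour `x` of `r`: all vertices reachable from `x` avoiding `r`. -/
def branchSet {V : Type} (G : SimpleGraph V) (r x : V) : Set V :=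
  {v | ∃ p : G.Walk x v, r ∉ p.support}

/-- `m` of the branch of `(G, r)` at the neighbour `x`. -/
noncomputable def branchM {V : Type} (G : SimpleGraph V) (r x : V) : ℕ :=
  mm (G.induce (branchSet G r x))

/-- `m_0` of the branch of `(G, r)` at the neighbour `x` (the branch is rooted at `x`). -/
noncomputable def branchM0 {V : Type} (G : SimpleGraph V) (r x : V) : ℕ :=
  mm (G.induce (branchSet G r x \ {x}))

/-- The branch of `(G, r)` at the neighbour `x`, rooted at `x`, is of type A. -/
def BranchTypeA {V : Type} (G : SimpleGraph V) (r x : V) : Prop :=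
  ∃ h : x ∈ branchSet G r x, TypeA (G.induce (branchSet G r x)) ⟨x, h⟩

/-- The branch of `(G, r)` at the neighbour `x`, rooted at `x`, is of type B. -/
def BranchTypeB {V : Type} (G : SimpleGraph V) (r x : V) : Prop :=
  ∃ h : x ∈ branchSet G r x, TypeB (G.induce (branchSet G r x)) ⟨x, h⟩

/-- The bipartition condition for rooted trees: a one-vertex rooted tree fulfils it,
and a rooted tree fulfils it if all of its branches (each rooted at the corresponding
neighbour of the root) fulfil it and have type different from the type of the root. -/
inductive BipCond : {V : Type} → SimpleGraph V → V → Prop where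
  | single {V : Type} (G : SimpleGraph V) (r : V) (h : ∀ v : V, v = r) : BipCond G r
  | node {V : Type} (G : SimpleGraph V) (r : V)
      (hrec : ∀ (x : V), G.Adj r x → ∀ (hm : x ∈ branchSet G r x),
        BipCond (G.induce (branchSet G r x)) ⟨x, hm⟩)
      (htype : ∀ (x : V), G.Adj r x → ∀ (hm : x ∈ branchSet G r x),
        ¬ (TypeA G r ↔ TypeA (G.induce (branchSet G r x)) ⟨x, hm⟩)) :
      BipCond G r

/-- The integer sequence `G_j` with `G_0 = 0`, `G_1 = 1`, `G_{j+2} = 11 G_{j+1} − 9 G_j`. -/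
def Gseq : ℕ → ℤ
  | 0 => 0
  | 1 => 1
  | (n + 2) => 11 * Gseq (n + 1) - 9 * Gseq n

/-- Attach one new pendant vertex to the vertex `w` of `H`. -/
def addLeaf {W : Type} (H : SimpleGraph W) (w : W) : SimpleGraph (W ⊕ Unit) :=
  SimpleGraph.fromRel (fun a b =>
    (∃ x y, H.Adj x y ∧ a = Sum.inl x ∧ b = Sum.inl y) ∨
    (a = Sum.inl w ∧ b = Sum.inr ()))

/-- The 6-vertex spider with legs of lengths 1, 1 and 3 attached to the center `0`. -/
def spider6 : SimpleGraph (Fin 6) :=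
  SimpleGraph.fromRel (fun a b =>
    (a = 0 ∧ b = 1) ∨ (a = 0 ∧ b = 2) ∨ (a = 0 ∧ b = 3) ∨ (a = 3 ∧ b = 4) ∨ (a = 4 ∧ b = 5))


section Aux

variable {V : Type} [Fintype V]

lemma empty_isMatchingSet (G : SimpleGraph V) : IsMatchingSet G ∅ :=
  ⟨Set.empty_subset _, Set.pairwise_empty _⟩

lemma matchNum_bddAbove (G : SimpleGraph V) :
    BddAbove {n | ∃ M : Set (Sym2 V), IsMatchingSet G M ∧ M.ncard = n} := by
  refine ⟨G.edgeSet.ncard, ?_⟩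
  rintro n ⟨M, hM, rfl⟩
  exact Set.ncard_le_ncard hM.1 (Set.toFinite _)

lemma matchNum_spec (G : SimpleGraph V) :
    ∃ M, IsMatchingSet G M ∧ M.ncard = matchNum G := by
  have hne : ({n | ∃ M : Set (Sym2 V), IsMatchingSet G M ∧ M.ncard = n}).Nonempty :=
    ⟨0, ∅, empty_isMatchingSet G, by simp⟩
  exact Nat.sSup_mem hne (matchNum_bddAbove G)

lemma ncard_le_matchNum {G : SimpleGraph V} {M : Set (Sym2 V)} (hM : IsMatchingSet G M) :
    M.ncard ≤ matchNum G :=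
  le_csSup (matchNum_bddAbove G) ⟨M, hM, rfl⟩

lemma exists_maxMatching (G : SimpleGraph V) : ∃ M, M ∈ MaximumMatchings G := by
  obtain ⟨M, h1, h2⟩ := matchNum_spec G
  exact ⟨M, h1, h2⟩

lemma edge_at (G : SimpleGraph V) {f : Sym2 V} (hf : f ∈ G.edgeSet) {a : V} (ha : a ∈ f) :
    ∃ b, f = s(a, b) ∧ G.Adj a b := by
  induction f using Sym2.ind with
  | _ x y =>
    rw [Sym2.mem_iff] at ha
    rcases ha with rfl | rfl
    · exact ⟨y, rfl, G.mem_edgeSet.1 hf⟩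
    · exact ⟨x, Sym2.eq_swap, (G.mem_edgeSet.1 hf).symm⟩

lemma matching_symm : Symmetric (fun e f : Sym2 V => ∀ v : V, ¬(v ∈ e ∧ v ∈ f)) := by
  intro e f h v hv
  exact h v ⟨hv.2, hv.1⟩

lemma insert_isMatchingSet {G : SimpleGraph V} {M : Set (Sym2 V)} (hM : IsMatchingSet G M)
    {a b : V} (hab : G.Adj a b) (ha : ¬ Covers M a) (hb : ¬ Covers M b) :
    IsMatchingSet G (insert s(a, b) M) := by
  constructor
  · rw [Set.insert_subset_iff]
    exact ⟨G.mem_edgeSet.2 hab, hM.1⟩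
  · haveI : Std.Symm (fun e f : Sym2 V => ∀ v : V, ¬(v ∈ e ∧ v ∈ f)) :=
      ⟨fun a b h => matching_symm h⟩
    rw [Set.pairwise_insert_of_symm]
    refine ⟨hM.2, ?_⟩
    rintro f hf _ v ⟨hv1, hv2⟩
    rw [Sym2.mem_iff] at hv1
    rcases hv1 with rfl | rfl
    · exact ha ⟨f, hf, hv2⟩
    · exact hb ⟨f, hf, hv2⟩

/-- the unique matching edge at a covered vertex -/
lemma not_covers_diff {G : SimpleGraph V} {M : Set (Sym2 V)} (hM : IsMatchingSet G M)
    {f : Sym2 V} (hf : f ∈ M) {a : V} (haf : a ∈ f) : ¬ Covers (M \ {f}) a := by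
  rintro ⟨g, ⟨hgM, hgf⟩, hag⟩
  exact hM.2 hf hgM (fun h => hgf (h ▸ rfl)) a ⟨haf, hag⟩

/-- a neighbour `w` of a "leaf" `ℓ` (a vertex whose unique neighbour is `w`) is covered by
every maximum matching. -/
lemma leaf_nbr_covered {G : SimpleGraph V} {ℓ w : V} (hlw : G.Adj ℓ w)
    (huniq : ∀ z, G.Adj ℓ z → z = w) {M : Set (Sym2 V)} (hM : M ∈ MaximumMatchings G) :
    Covers M w := by
  by_contra hw
  have hl : ¬ Covers M ℓ := by
    rintro ⟨e, heM, hle⟩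
    obtain ⟨z, rfl, hz⟩ := edge_at G (hM.1.1 heM) hle
    exact hw ⟨s(ℓ, z), heM, by rw [huniq z hz]; exact Sym2.mem_mk_right ℓ w⟩
  have hnm : s(ℓ, w) ∉ M := fun h => hw ⟨s(ℓ, w), h, Sym2.mem_mk_right ℓ w⟩
  have h2 := ncard_le_matchNum (insert_isMatchingSet hM.1 hlw hl hw)
  rw [Set.ncard_insert_of_notMem hnm (Set.toFinite M)] at h2
  have := hM.2
  omega

/-- reaching from an isolated vertex -/
lemma isolated_reachable {G : SimpleGraph V} {x y : V} (hx : ∀ z, ¬ G.Adj x z)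
    (h : G.Reachable x y) : x = y := by
  obtain ⟨p⟩ := h
  cases p with
  | nil => rfl
  | cons h' _ => exact absurd h' (hx _)

/-- Existence of a leaf of the induced graph on `S`, reachable from `x`. -/
lemma exists_leaf (G : SimpleGraph V) (hG : G.IsAcyclic) (S : Set V) {x y : V}
    (hx : x ∈ S) (hy : y ∈ S) (hxy : G.Adj x y) :
    ∃ ℓ ∈ S, ∃ w ∈ S, G.Adj ℓ w ∧ (∀ z ∈ S, G.Adj ℓ z → z = w) ∧ G.Reachable x ℓ := by
  classical
  set T : Set ℕ :=
    {n | ∃ (a : V) (p : G.Walk a x), p.IsPath ∧ (∀ v ∈ p.support, v ∈ S) ∧ p.length = n} with hT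
  have h1T : (1 : ℕ) ∈ T := by
    refine ⟨y, Walk.cons hxy.symm Walk.nil, ?_, ?_, rfl⟩
    · rw [Walk.cons_isPath_iff]
      exact ⟨Walk.IsPath.nil, by simp [hxy.ne']⟩
    · intro v hv
      simp only [Walk.support_cons, Walk.support_nil, List.mem_cons, List.mem_singleton] at hv
      rcases hv with rfl | hv
      · exact hy
      · simp at hv; subst hv; exact hx
  have hne : T.Nonempty := ⟨1, h1T⟩
  have hbdd : BddAbove T := by
    refine ⟨Fintype.card V, ?_⟩
    rintro n ⟨a, p, hp, _, rfl⟩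
    exact hp.length_lt.le
  have hL1 : 1 ≤ sSup T := le_csSup hbdd h1T
  obtain ⟨ℓ, p, hp, hsupp, hlen⟩ := Nat.sSup_mem hne hbdd
  cases p with
  | nil => rw [Walk.length_nil] at hlen; omega
  | @cons _ w _ hw p' =>
    have hp' : p'.IsPath := (Walk.cons_isPath_iff _ _).1 hp |>.1
    have hlns : ℓ ∉ p'.support := (Walk.cons_isPath_iff _ _).1 hp |>.2
    refine ⟨ℓ, hsupp ℓ (Walk.start_mem_support _), w, ?_, hw, ?_, ?_⟩
    · exact hsupp w (by rw [Walk.support_cons]; exact List.mem_cons_of_mem _ (Walk.start_mem_support _))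
    · intro z hzS hz
      by_contra hzw
      have hzl : z ≠ ℓ := hz.ne'
      by_cases hzsup : z ∈ (Walk.cons hw p').support
      · -- z in the path: produce a cycle
        have hzp' : z ∈ p'.support := by
          rw [Walk.support_cons, List.mem_cons] at hzsup
          rcases hzsup with h | h
          · exact absurd h hzl
          · exact h
        set t := p'.takeUntil z hzp' with ht
        have htp : t.IsPath := hp'.takeUntil hzp'
        have hlt : ℓ ∉ t.support := fun h => hlns (Walk.support_takeUntil_subset _ hzp' h)
        have hinner : (Walk.cons hw t).IsPath := by
          rw [Walk.cons_isPath_iff]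
          exact ⟨htp, hlt⟩
        have hcyc : (Walk.cons hz.symm (Walk.cons hw t)).IsCycle := by
          rw [Walk.cons_isCycle_iff]
          refine ⟨hinner, ?_⟩
          rw [Walk.edges_cons, List.mem_cons]
          rintro (h | h)
          · rw [Sym2.eq_iff] at h
            rcases h with ⟨h1, h2⟩ | ⟨h1, h2⟩
            · exact hzl h1
            · exact hzw h1
          · exact hlt (Walk.snd_mem_support_of_mem_edges t h)
        exact hG _ hcyc
      · -- z not in the path: extend, contradicting maximality
        have hnp : (Walk.cons hz.symm (Walk.cons hw p')).IsPath := by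
          rw [Walk.cons_isPath_iff]
          exact ⟨hp, hzsup⟩
        have hmem : (Walk.cons hz.symm (Walk.cons hw p')).length ∈ T := by
          refine ⟨z, _, hnp, ?_, rfl⟩
          intro v hv
          rw [Walk.support_cons, List.mem_cons] at hv
          rcases hv with rfl | hv
          · exact hzS
          · exact hsupp v hv
        have := le_csSup hbdd hmem
        rw [Walk.length_cons] at this
        omega
    · exact (Reachable.symm ⟨Walk.cons hw p'⟩)

lemma covers_insert {M : Set (Sym2 V)} {e : Sym2 V} {x : V} :
    Covers (insert e M) x ↔ x ∈ e ∨ Covers M x := by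
  constructor
  · rintro ⟨f, hf, hx⟩
    rcases hf with rfl | hf
    · exact Or.inl hx
    · exact Or.inr ⟨f, hf, hx⟩
  · rintro (h | ⟨f, hf, hx⟩)
    · exact ⟨e, Set.mem_insert _ _, h⟩
    · exact ⟨f, Set.mem_insert_of_mem _ hf, hx⟩

lemma ncard_covered (G : SimpleGraph V) (M : Set (Sym2 V)) (hM : IsMatchingSet G M) :
    {x | Covers M x}.ncard = 2 * M.ncard := by
  classical
  revert hM
  refine Set.Finite.induction_on
    (motive := fun N _ => IsMatchingSet G N → {x | Covers N x}.ncard = 2 * N.ncard)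
    M (Set.toFinite M) (by intro _; simp [Covers]) ?_
  clear M
  intro e M henM hMfin ih hM
  have hMs : IsMatchingSet G M := by
    refine ⟨fun f hf => hM.1 (Set.mem_insert_of_mem _ hf), hM.2.mono (Set.subset_insert _ _)⟩
  have heE : e ∈ G.edgeSet := hM.1 (Set.mem_insert _ _)
  obtain ⟨a, b, rfl⟩ : ∃ a b, e = s(a, b) := Sym2.ind (fun a b => ⟨a, b, rfl⟩) e
  have hab : a ≠ b := (G.mem_edgeSet.1 heE).ne
  have hset : {x | Covers (insert s(a,b) M) x} = ({a, b} : Set V) ∪ {x | Covers M x} := by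
    ext x
    simp only [Set.mem_setOf_eq, covers_insert, Set.mem_union, Set.mem_insert_iff,
      Set.mem_singleton_iff, Sym2.mem_iff]
  have hdisj : Disjoint ({a, b} : Set V) {x | Covers M x} := by
    rw [Set.disjoint_left]
    rintro x hx ⟨f, hf, hxf⟩
    have hne : s(a, b) ≠ f := fun h => henM (h ▸ hf)
    refine hM.2 (Set.mem_insert _ _) (Set.mem_insert_of_mem _ hf) hne x ⟨?_, hxf⟩
    rw [Sym2.mem_iff]
    simpa using hx
  rw [hset, Set.ncard_union_eq hdisj (Set.toFinite _) (Set.toFinite _), ih hMs,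
    Set.ncard_insert_of_notMem henM hMfin, Set.ncard_pair hab]
  ring

lemma matching_eq_of_covers_aux (G : SimpleGraph V) (hG : G.IsAcyclic) :
    ∀ n (M M' : Set (Sym2 V)), M.ncard = n → IsMatchingSet G M → IsMatchingSet G M' →
      (∀ x, Covers M x ↔ Covers M' x) → M = M' := by
  intro n
  induction n using Nat.strong_induction_on with
  | _ n ih =>
    intro M M' hn hM hM' hcov
    rcases Set.eq_empty_or_nonempty M with rfl | ⟨e₀, he₀⟩
    · by_contra h
      obtain ⟨f, hf⟩ := (Set.nonempty_iff_ne_empty.2 (fun h' => h h'.symm) :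
        M'.Nonempty)
      obtain ⟨a, b, rfl⟩ : ∃ a b, f = s(a, b) := Sym2.ind (fun a b => ⟨a, b, rfl⟩) f
      have : Covers (∅ : Set (Sym2 V)) a := (hcov a).2 ⟨s(a, b), hf, Sym2.mem_mk_left a b⟩
      obtain ⟨g, hg, -⟩ := this
      exact hg
    · obtain ⟨a, b, rfl⟩ : ∃ a b, e₀ = s(a, b) := Sym2.ind (fun a b => ⟨a, b, rfl⟩) e₀
      have hadj : G.Adj a b := G.mem_edgeSet.1 (hM.1 he₀)
      have haS : Covers M a := ⟨s(a,b), he₀, Sym2.mem_mk_left a b⟩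
      have hbS : Covers M b := ⟨s(a,b), he₀, Sym2.mem_mk_right a b⟩
      obtain ⟨ℓ, hℓS, w, hwS, hlw, huniq, -⟩ :=
        exists_leaf G hG {x | Covers M x} haS hbS hadj
      -- the M-edge at ℓ is s(ℓ, w)
      have hfM : s(ℓ, w) ∈ M := by
        obtain ⟨f, hf, hlf⟩ := hℓS
        obtain ⟨z, rfl, hz⟩ := edge_at G (hM.1 hf) hlf
        have hzS : Covers M z := ⟨s(ℓ, z), hf, Sym2.mem_mk_right ℓ z⟩
        obtain rfl := huniq z hzS hz
        exact hf
      have hfM' : s(ℓ, w) ∈ M' := by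
        obtain ⟨f, hf, hlf⟩ := (hcov ℓ).1 hℓS
        obtain ⟨z, rfl, hz⟩ := edge_at G (hM'.1 hf) hlf
        have hzS : Covers M z := (hcov z).2 ⟨s(ℓ, z), hf, Sym2.mem_mk_right ℓ z⟩
        obtain rfl := huniq z hzS hz
        exact hf
      -- remove the common edge and recurse
      have key : ∀ (N : Set (Sym2 V)), IsMatchingSet G N → s(ℓ, w) ∈ N →
          ∀ x, Covers (N \ {s(ℓ, w)}) x ↔ (Covers N x ∧ x ≠ ℓ ∧ x ≠ w) := by
        intro N hN hfN x
        constructor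
        · rintro ⟨g, ⟨hgN, hgf⟩, hxg⟩
          refine ⟨⟨g, hgN, hxg⟩, ?_, ?_⟩
          · rintro rfl
            exact not_covers_diff hN hfN (Sym2.mem_mk_left _ _) ⟨g, ⟨hgN, hgf⟩, hxg⟩
          · rintro rfl
            exact not_covers_diff hN hfN (Sym2.mem_mk_right _ _) ⟨g, ⟨hgN, hgf⟩, hxg⟩
        · rintro ⟨⟨g, hgN, hxg⟩, hxl, hxw⟩
          refine ⟨g, ⟨hgN, ?_⟩, hxg⟩
          intro hg
          rw [Set.mem_singleton_iff] at hg
          subst hg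
          rcases Sym2.mem_iff.1 hxg with rfl | rfl
          · exact hxl rfl
          · exact hxw rfl
      have hM1 : IsMatchingSet G (M \ {s(ℓ, w)}) :=
        ⟨fun f hf => hM.1 hf.1, hM.2.mono Set.diff_subset⟩
      have hM1' : IsMatchingSet G (M' \ {s(ℓ, w)}) :=
        ⟨fun f hf => hM'.1 hf.1, hM'.2.mono Set.diff_subset⟩
      have hcard : (M \ {s(ℓ, w)}).ncard = n - 1 := by
        rw [Set.ncard_diff_singleton_of_mem hfM, hn]
      have hpos : 1 ≤ n := by
        rw [← hn]
        exact (Set.ncard_pos (Set.toFinite _)).2 ⟨_, he₀⟩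
      have heq := ih (n - 1) (by omega) (M \ {s(ℓ, w)}) (M' \ {s(ℓ, w)}) hcard hM1 hM1'
        (fun x => by rw [key M hM hfM x, key M' hM' hfM' x, hcov x])
      have : insert s(ℓ, w) (M \ {s(ℓ, w)}) = insert s(ℓ, w) (M' \ {s(ℓ, w)}) := by
        rw [heq]
      rwa [Set.insert_diff_singleton, Set.insert_diff_singleton,
        Set.insert_eq_self.2 hfM, Set.insert_eq_self.2 hfM'] at this

lemma matching_eq_of_covers (G : SimpleGraph V) (hG : G.IsAcyclic)
    {M M' : Set (Sym2 V)} (hM : IsMatchingSet G M) (hM' : IsMatchingSet G M')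
    (hcov : ∀ x, Covers M x ↔ Covers M' x) : M = M' :=
  matching_eq_of_covers_aux G hG M.ncard M M' rfl hM hM' hcov

lemma mm_eq_one_of_hasPM (G : SimpleGraph V) (hG : G.IsAcyclic)
    (hPM : HasPerfectMatching G) : mm G = 1 := by
  obtain ⟨M₀, hM₀, hcov₀⟩ := hPM
  have hcovuniv : ∀ M ∈ MaximumMatchings G, {x | Covers M x} = Set.univ := by
    intro M hM
    have h1 : {x | Covers M₀ x} = Set.univ := Set.eq_univ_of_forall hcov₀
    have h2 : M₀.ncard ≤ M.ncard := hM.2 ▸ ncard_le_matchNum hM₀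
    have h3 : (Set.univ : Set V).ncard ≤ {x | Covers M x}.ncard := by
      rw [ncard_covered G M hM.1, ← h1, ncard_covered G M₀ hM₀]
      omega
    exact Set.eq_of_subset_of_ncard_le (Set.subset_univ _) h3 (Set.toFinite _)
  obtain ⟨Mx, hMx⟩ := exists_maxMatching G
  rw [mm]
  rw [Set.ncard_eq_one]
  refine ⟨Mx, ?_⟩
  ext M
  simp only [Set.mem_singleton_iff]
  constructor
  · intro hM
    refine matching_eq_of_covers G hG hM.1 hMx.1 ?_
    intro x
    have := hcovuniv M hM
    have := hcovuniv Mx hMx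
    constructor
    · intro _; exact (Set.eq_univ_iff_forall.1 (hcovuniv Mx hMx)) x
    · intro _; exact (Set.eq_univ_iff_forall.1 (hcovuniv M hM)) x
  · rintro rfl; exact hMx

lemma mm_eq_one_of_edgeless (G : SimpleGraph V) (hE : ∀ a b, ¬ G.Adj a b) : mm G = 1 := by
  have hES : G.edgeSet = ∅ := by
    ext e
    induction e using Sym2.ind with
    | _ a b => simp [hE a b]
  have hMempty : ∀ M : Set (Sym2 V), IsMatchingSet G M → M = ∅ := by
    intro M hM
    rw [Set.eq_empty_iff_forall_notMem]
    intro e he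
    have := hM.1 he
    rw [hES] at this
    exact this
  have hnum : matchNum G = 0 := by
    obtain ⟨M, hM, h2⟩ := matchNum_spec G
    rw [← h2, hMempty M hM, Set.ncard_empty]
  rw [mm, Set.ncard_eq_one]
  refine ⟨∅, ?_⟩
  ext M
  simp only [Set.mem_singleton_iff]
  constructor
  · intro hM; exact hMempty M hM.1
  · rintro rfl
    exact ⟨empty_isMatchingSet G, by simp [hnum]⟩

lemma cherry (G : SimpleGraph V) {x0 x1 x2 : V} (h01 : x0 ≠ x1) (h02 : x0 ≠ x2)
    (h12 : x1 ≠ x2) :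
    ∃ H : SimpleGraph V, H.IsAcyclic ∧ 2 ≤ mm H := by
  classical
  set e1 : Sym2 V := s(x0, x1) with he1
  set e2 : Sym2 V := s(x0, x2) with he2
  have he12 : e1 ≠ e2 := by
    rw [he1, he2]
    intro h
    exact h12 (Sym2.congr_right.1 h)
  set H : SimpleGraph V := fromEdgeSet {e1, e2} with hH
  have hES : H.edgeSet = {e1, e2} := by
    rw [hH, edgeSet_fromEdgeSet]
    ext e
    simp only [Set.mem_diff, Set.mem_setOf_eq, and_iff_left_iff_imp]
    intro he
    rcases he with rfl | rfl
    · rw [he1, Sym2.mem_diagSet, Sym2.mk_isDiag_iff]; exact h01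
    · rw [he2, Sym2.mem_diagSet, Sym2.mk_isDiag_iff]; exact h02
  have hacyc : H.IsAcyclic := by
    intro a c hc
    have hnodup : c.edges.Nodup := hc.edges_nodup
    have hlen : 3 ≤ c.length := hc.three_le_length
    have hsub : ∀ f ∈ c.edges, f ∈ ({e1, e2} : Finset (Sym2 V)) := by
      intro f hf
      have := c.edges_subset_edgeSet hf
      rw [hES] at this
      simpa using this
    have h1 : c.edges.length ≤ ({e1, e2} : Finset (Sym2 V)).card := by
      rw [← List.toFinset_card_of_nodup hnodup]
      exact Finset.card_le_card (fun f hf => hsub f (List.mem_toFinset.1 hf))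
    have h2 : ({e1, e2} : Finset (Sym2 V)).card ≤ 2 := by
      apply le_trans (Finset.card_insert_le _ _)
      simp
    rw [Walk.length_edges] at h1
    omega
  have hadj1 : H.Adj x0 x1 := by
    rw [← SimpleGraph.mem_edgeSet, hES]; left; rfl
  have hadj2 : H.Adj x0 x2 := by
    rw [← SimpleGraph.mem_edgeSet, hES]; right; rfl
  have hm1 : IsMatchingSet H {e1} := by
    refine ⟨by rw [hES]; intro f hf; rcases hf with rfl; left; rfl, Set.pairwise_singleton _ _⟩
  have hm2 : IsMatchingSet H {e2} := by
    refine ⟨by rw [hES]; intro f hf; rcases hf with rfl; right; rfl, Set.pairwise_singleton _ _⟩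
  have hnum : matchNum H = 1 := by
    apply le_antisymm
    · refine csSup_le ⟨0, ∅, empty_isMatchingSet H, by simp⟩ ?_
      rintro n ⟨M, hM, rfl⟩
      by_cases h1M : e1 ∈ M
      · by_cases h2M : e2 ∈ M
        · exfalso
          exact hM.2 h1M h2M he12 x0 ⟨Sym2.mem_mk_left _ _, Sym2.mem_mk_left _ _⟩
        · have : M ⊆ {e1} := by
            intro f hf
            have := hM.1 hf
            rw [hES] at this
            rcases this with rfl | rfl
            · rfl
            · exact absurd hf h2M
          simpa using Set.ncard_le_ncard this (Set.toFinite _)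
      · have : M ⊆ {e2} := by
          intro f hf
          have := hM.1 hf
          rw [hES] at this
          rcases this with rfl | rfl
          · exact absurd hf h1M
          · rfl
        simpa using Set.ncard_le_ncard this (Set.toFinite _)
    · have := ncard_le_matchNum hm1
      simpa using this
  have hmem1 : ({e1} : Set (Sym2 V)) ∈ MaximumMatchings H := ⟨hm1, by simp [hnum]⟩
  have hmem2 : ({e2} : Set (Sym2 V)) ∈ MaximumMatchings H := ⟨hm2, by simp [hnum]⟩
  refine ⟨H, hacyc, ?_⟩
  have hsub : ({{e1}, {e2}} : Set (Set (Sym2 V))) ⊆ MaximumMatchings H := by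
    rintro M (rfl | rfl)
    · exact hmem1
    · exact hmem2
  have hne : ({e1} : Set (Sym2 V)) ≠ {e2} := by
    simp [Set.singleton_eq_singleton_iff, he12]
  calc (2 : ℕ) = ({{e1}, {e2}} : Set (Set (Sym2 V))).ncard := (Set.ncard_pair hne).symm
    _ ≤ mm H := Set.ncard_le_ncard hsub (Set.toFinite _)

lemma key_construction (G : SimpleGraph V) (hG : G.IsAcyclic) (u v : V)
    (hnr : ¬ G.Reachable u v)
    (hB : ∀ M ∈ MaximumMatchings G, Covers M u)
    (hA : ∃ M ∈ MaximumMatchings G, ¬ Covers M v) :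
    ∃ H : SimpleGraph V, H.IsAcyclic ∧ mm G < mm H := by
  classical
  have huv : u ≠ v := by rintro rfl; exact hnr (Reachable.refl u)
  have hnadj : ¬ G.Adj u v := fun h => hnr h.reachable
  set e : Sym2 V := s(u, v) with he
  set H : SimpleGraph V := G ⊔ fromEdgeSet {e} with hH
  have hGH : G ≤ H := le_sup_left
  have hES : H.edgeSet = G.edgeSet ∪ {e} := by
    rw [hH, edgeSet_sup, edgeSet_fromEdgeSet]
    congr 1
    ext f
    simp only [Set.mem_diff, Set.mem_singleton_iff, Set.mem_setOf_eq, and_iff_left_iff_imp]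
    rintro rfl
    rw [he, Sym2.mem_diagSet, Sym2.mk_isDiag_iff]
    exact huv
  have heG : e ∉ G.edgeSet := fun h => hnadj (G.mem_edgeSet.1 h)
  -- membership of matchings
  have hmGH : ∀ M : Set (Sym2 V), IsMatchingSet G M → IsMatchingSet H M := by
    intro M hM
    exact ⟨fun f hf => (hES ▸ Set.mem_union_left _ (hM.1 hf) : f ∈ H.edgeSet), hM.2⟩
  have hmHG : ∀ M : Set (Sym2 V), IsMatchingSet H M → e ∉ M → IsMatchingSet G M := by
    intro M hM heM
    refine ⟨fun f hf => ?_, hM.2⟩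
    have := hM.1 hf
    rw [hES] at this
    rcases this with h | h
    · exact h
    · rw [Set.mem_singleton_iff] at h
      exact absurd (h ▸ hf) heM
  -- H is acyclic
  have hHacyc : H.IsAcyclic := by
    intro a c hc
    by_cases hec : e ∈ c.edges
    · have := (adj_and_reachable_delete_edges_iff_exists_cycle (G := H) (v := u) (w := v)).2
        ⟨a, c, hc, by rw [← he]; exact hec⟩
      refine hnr (Reachable.mono (G' := G) ?_ this.2)
      intro p q hpq
      rw [deleteEdges_adj] at hpq
      obtain ⟨hpq1, hpq2⟩ := hpq
      rw [hH, sup_adj] at hpq1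
      rcases hpq1 with h | h
      · exact h
      · exact absurd ((fromEdgeSet_adj _).1 h).1 hpq2
    · have hsub : ∀ f ∈ c.edges, f ∈ G.edgeSet := by
        intro f hf
        have := c.edges_subset_edgeSet hf
        rw [hES] at this
        rcases this with h | h
        · exact h
        · rw [Set.mem_singleton_iff] at h
          exact absurd (h ▸ hf) hec
      exact hG _ (hc.transfer hsub)
  -- matchNum H = matchNum G
  have hnum : matchNum H = matchNum G := by
    apply le_antisymm
    · obtain ⟨N, hN, hNcard⟩ := matchNum_spec H
      rw [← hNcard]
      by_cases heN : e ∈ N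
      · by_contra hlt
        push_neg at hlt
        have hN' : IsMatchingSet G (N \ {e}) :=
          ⟨fun f hf => by
            have := hN.1 hf.1
            rw [hES] at this
            rcases this with h | h
            · exact h
            · exact absurd (Set.mem_singleton_iff.1 h) (by simpa using hf.2), hN.2.mono Set.diff_subset⟩
        have hcard' : (N \ {e}).ncard = N.ncard - 1 :=
          Set.ncard_diff_singleton_of_mem heN
        have hle := ncard_le_matchNum hN'
        have hpos : 1 ≤ N.ncard := (Set.ncard_pos (Set.toFinite _)).2 ⟨e, heN⟩
        have hmax : (N \ {e}).ncard = matchNum G := by omega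
        have hcovu := hB (N \ {e}) ⟨hN', hmax⟩
        exact not_covers_diff hN heN (by rw [he]; exact Sym2.mem_mk_left u v) hcovu
      · exact ncard_le_matchNum (hmHG N hN heN)
    · obtain ⟨M, hM, hMcard⟩ := matchNum_spec G
      rw [← hMcard]
      exact ncard_le_matchNum (hmGH M hM)
  -- maximum matchings of G are maximum matchings of H
  have hsub : MaximumMatchings G ⊆ MaximumMatchings H := by
    intro M hM
    exact ⟨hmGH M hM.1, by rw [hnum]; exact hM.2⟩
  -- a new maximum matching of H
  obtain ⟨Mv, hMv, hMvv⟩ := hA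
  obtain ⟨f, hfMv, huf⟩ := hB Mv hMv
  have hNmiss_u : ¬ Covers (Mv \ {f}) u := not_covers_diff hMv.1 hfMv huf
  have hNmiss_v : ¬ Covers (Mv \ {f}) v := fun ⟨g, hg, hvg⟩ => hMvv ⟨g, hg.1, hvg⟩
  have hNmatch : IsMatchingSet G (Mv \ {f}) :=
    ⟨fun g hg => hMv.1.1 hg.1, hMv.1.2.mono Set.diff_subset⟩
  have hHuv : H.Adj u v := by
    rw [hH, sup_adj, fromEdgeSet_adj]
    right
    exact ⟨rfl, huv⟩
  set N : Set (Sym2 V) := insert e (Mv \ {f}) with hN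
  have hNmatchH : IsMatchingSet H N := by
    rw [hN, he]
    exact insert_isMatchingSet (hmGH _ hNmatch) hHuv hNmiss_u hNmiss_v
  have heN' : e ∉ Mv \ {f} := fun h => heG (hNmatch.1 h)
  have hfpos : 1 ≤ Mv.ncard := (Set.ncard_pos (Set.toFinite _)).2 ⟨f, hfMv⟩
  have hNcard : N.ncard = matchNum H := by
    rw [hN, Set.ncard_insert_of_notMem heN' (Set.toFinite _),
      Set.ncard_diff_singleton_of_mem hfMv, hnum]
    have := hMv.2
    omega
  have hNmax : N ∈ MaximumMatchings H := ⟨hNmatchH, hNcard⟩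
  have hNnotG : N ∉ MaximumMatchings G := by
    intro hcon
    exact heG (hcon.1.1 (Set.mem_insert _ _))
  refine ⟨H, hHacyc, ?_⟩
  apply Set.ncard_lt_ncard
  · rw [Set.ssubset_def]
    exact ⟨hsub, fun hcon => hNnotG (hcon hNmax)⟩
  · exact Set.toFinite _

lemma main_disconnected (G : SimpleGraph V) (hG : G.IsAcyclic)
    (h3 : 3 ≤ Fintype.card V) (hdisc : ¬ G.Connected) :
    ∃ H : SimpleGraph V, H.IsAcyclic ∧ mm G < mm H := by
  classical
  -- three distinct vertices
  obtain ⟨s3, -, hs3⟩ := Finset.exists_subset_card_eq (le_trans h3 (le_of_eq (Finset.card_univ).symm) : 3 ≤ (Finset.univ : Finset V).card)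
  obtain ⟨x0, x1, x2, h01, h02, h12, -⟩ := Finset.card_eq_three.1 hs3
  by_cases hE : ∀ a b, ¬ G.Adj a b
  · obtain ⟨H, hH1, hH2⟩ := cherry G h01 h02 h12
    exact ⟨H, hH1, by rw [mm_eq_one_of_edgeless G hE]; omega⟩
  push_neg at hE
  obtain ⟨a, b, hab⟩ := hE
  by_cases hPM : HasPerfectMatching G
  · obtain ⟨H, hH1, hH2⟩ := cherry G h01 h02 h12
    exact ⟨H, hH1, by rw [mm_eq_one_of_hasPM G hG hPM]; omega⟩
  -- no perfect matching: some maximum matching misses a vertex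
  obtain ⟨M₀, hM₀⟩ := exists_maxMatching G
  have hex : ∃ v, ¬ Covers M₀ v := by
    by_contra h
    push_neg at h
    exact hPM ⟨M₀, hM₀.1, h⟩
  obtain ⟨v, hv⟩ := hex
  -- two non-reachable vertices
  have hnonempty : Nonempty V := Fintype.card_pos_iff.1 (by omega)
  have hpre : ¬ G.Preconnected := fun h => hdisc ⟨h⟩
  rw [Preconnected] at hpre
  push_neg at hpre
  obtain ⟨p, q, hpq⟩ := hpre
  have hxv : ∃ x, ¬ G.Reachable v x := by
    by_cases h : G.Reachable v p
    · exact ⟨q, fun h' => hpq (h.symm.trans h')⟩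
    · exact ⟨p, h⟩
  obtain ⟨x, hx⟩ := hxv
  by_cases hxdeg : ∃ y, G.Adj x y
  · -- x has a neighbour : find a leaf in the component of x
    obtain ⟨y, hxy⟩ := hxdeg
    obtain ⟨ℓ, -, w, -, hlw, huniq, hreach⟩ :=
      exists_leaf G hG Set.univ (Set.mem_univ x) (Set.mem_univ y) hxy
    have hB : ∀ M ∈ MaximumMatchings G, Covers M w :=
      fun M hM => leaf_nbr_covered hlw (fun z hz => huniq z (Set.mem_univ z) hz) hM
    have hnr : ¬ G.Reachable w v := by
      intro h
      exact hx ((h.symm.trans hlw.symm.reachable).trans hreach.symm)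
    exact key_construction G hG w v hnr hB ⟨M₀, hM₀, hv⟩
  · -- x is isolated
    push_neg at hxdeg
    obtain ⟨ℓ, -, w, -, hlw, huniq, hreach⟩ :=
      exists_leaf G hG Set.univ (Set.mem_univ a) (Set.mem_univ b) hab
    have hB : ∀ M ∈ MaximumMatchings G, Covers M w :=
      fun M hM => leaf_nbr_covered hlw (fun z hz => huniq z (Set.mem_univ z) hz) hM
    have hxA : ∃ M ∈ MaximumMatchings G, ¬ Covers M x := by
      refine ⟨M₀, hM₀, ?_⟩
      rintro ⟨f, hf, hxf⟩
      obtain ⟨z, rfl, hz⟩ := edge_at G (hM₀.1.1 hf) hxf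
      exact hxdeg z hz
    have hnr : ¬ G.Reachable w x := by
      intro h
      have := isolated_reachable hxdeg h.symm
      subst this
      exact hxdeg ℓ hlw.symm
    exact key_construction G hG w x hnr hB hxA

end Aux
section Iso

variable {V W : Type} [Fintype V] [Fintype W]

lemma isMatchingSet_map {G : SimpleGraph V} {G' : SimpleGraph W} (φ : G ≃g G')
    {M : Set (Sym2 V)} (hM : IsMatchingSet G M) :
    IsMatchingSet G' (Sym2.map φ '' M) := by
  constructor
  · rintro f' ⟨f, hf, rfl⟩
    have hfe := hM.1 hf
    induction f using Sym2.ind with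
    | _ a b =>
      rw [Sym2.map_pair_eq, SimpleGraph.mem_edgeSet, φ.map_adj_iff]
      exact G.mem_edgeSet.1 hfe
  · rintro e' ⟨e, he, rfl⟩ f' ⟨f, hf, rfl⟩ hne v' ⟨hv1, hv2⟩
    have hef : e ≠ f := fun h => hne (h ▸ rfl)
    obtain ⟨w1, hw1, hw1'⟩ := Sym2.mem_map.1 hv1
    obtain ⟨w2, hw2, hw2'⟩ := Sym2.mem_map.1 hv2
    have : w1 = w2 := φ.injective (by rw [hw1', hw2'])
    subst this
    exact hM.2 he hf hef w1 ⟨hw1, hw2⟩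

lemma mm_le_iso {G : SimpleGraph V} {G' : SimpleGraph W} (φ : G ≃g G') : mm G ≤ mm G' := by
  classical
  have hinj : Function.Injective (Sym2.map (φ : V → W)) := Sym2.map.injective φ.injective
  have hnumle : ∀ {A : Type} [Fintype A] {B : Type} [Fintype B]
      (G₁ : SimpleGraph A) (G₂ : SimpleGraph B) (ψ : G₁ ≃g G₂),
      matchNum G₁ ≤ matchNum G₂ := by
    intro A _ B _ G₁ G₂ ψ
    obtain ⟨M, hM, hcard⟩ := matchNum_spec G₁
    rw [← hcard, ← Set.ncard_image_of_injective M (Sym2.map.injective ψ.injective)]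
    exact ncard_le_matchNum (isMatchingSet_map ψ hM)
  have hnum : matchNum G = matchNum G' :=
    le_antisymm (hnumle G G' φ) (hnumle G' G φ.symm)
  have hsub : (fun M => Sym2.map (φ : V → W) '' M) '' MaximumMatchings G ⊆
      MaximumMatchings G' := by
    rintro M' ⟨M, hM, rfl⟩
    refine ⟨isMatchingSet_map φ hM.1, ?_⟩
    rw [Set.ncard_image_of_injective M hinj, hM.2, hnum]
  calc mm G = ((fun M => Sym2.map (φ : V → W) '' M) '' MaximumMatchings G).ncard :=
        (Set.ncard_image_of_injective _ (Set.image_injective.2 hinj)).symm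
    _ ≤ mm G' := Set.ncard_le_ncard hsub (Set.toFinite _)

lemma isAcyclic_iso {G : SimpleGraph V} {G' : SimpleGraph W} (φ : G ≃g G')
    (hG : G.IsAcyclic) : G'.IsAcyclic := by
  intro a c hc
  have := (Walk.map_isCycle_iff_of_injective (p := c)
    (f := φ.symm.toHom) φ.symm.injective).2 hc
  exact hG _ this

lemma connected_iso {G : SimpleGraph V} {G' : SimpleGraph W} (φ : G ≃g G')
    (hG : G'.Connected) : G.Connected := by
  have hne : Nonempty V := Nonempty.map φ.symm hG.nonempty
  rw [connected_iff]
  refine ⟨fun a b => ?_, hne⟩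
  have := (hG.preconnected (φ a) (φ b)).map φ.symm.toHom
  simpa using this

end Iso

/-- a forest of order at least 3 which maximises `m` among all forests of
the same order is connected, i.e. a tree. -/
theorem stmt_12 {V : Type} [Fintype V] (G : SimpleGraph V) (hforest : G.IsAcyclic)
    (h3 : 3 ≤ Fintype.card V)
    (hopt : ∀ H : SimpleGraph (Fin (Fintype.card V)), H.IsAcyclic → mm H ≤ mm G) :
    G.Connected := by
  classical
  by_contra hconn
  let e : V ≃ Fin (Fintype.card V) := Fintype.equivFin V
  let G2 : SimpleGraph (Fin (Fintype.card V)) := SimpleGraph.comap (⇑e.symm) G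
  have φ : G ≃g G2 :=
    { toEquiv := e,
      map_rel_iff' := by
        intro a b
        simp [G2, SimpleGraph.comap] }
  have hG2acyc : G2.IsAcyclic := isAcyclic_iso φ hforest
  have hG2disc : ¬ G2.Connected := fun h => hconn (connected_iso φ h)
  have hcard : 3 ≤ Fintype.card (Fin (Fintype.card V)) := by simpa using h3
  obtain ⟨H, hH1, hH2⟩ := main_disconnected G2 hG2acyc hcard hG2disc
  have h1 : mm H ≤ mm G := hopt H hH1
  have h2 : mm G ≤ mm G2 := mm_le_iso φ
  omega


end PaperMM
end

section
/- Let T be an optimal tree of order at least 3. Then every edge of T joins a vertex of type A to a vertex of type B. Moreover, for every edge st of T with s of type A and t of type B, letting T_s and T_t denote the connected components of T − st containing s and t respectively, the vertex s is of type A in T_s, the vertex t is of type B in T_t, and m(T) = m(T_s) m(T_t) + m(T_s − s) m(T_t − t). -/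
namespace PaperMM

open SimpleGraph

set_option linter.unusedSectionVars false
set_option linter.unusedVariables false

variable {V : Type} [Finite V]

/-! ### Supported matchings -/

variable {V : Type} [Finite V]

/-- Matchings of `G` all of whose edges have both endpoints inside `S`. -/
def MSupp (G : SimpleGraph V) (S : Set V) : Set (Set (Sym2 V)) :=
  {M | IsMatchingSet G M ∧ ∀ e ∈ M, ∀ v ∈ e, v ∈ S}

noncomputable def muS (G : SimpleGraph V) (S : Set V) : ℕ :=
  sSup {n | ∃ M ∈ MSupp G S, M.ncard = n}

def MaxS (G : SimpleGraph V) (S : Set V) : Set (Set (Sym2 V)) :=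
  {M | M ∈ MSupp G S ∧ M.ncard = muS G S}

noncomputable def mS (G : SimpleGraph V) (S : Set V) : ℕ := (MaxS G S).ncard

/-- abstract "type A within the support `S`". -/
def PA (G : SimpleGraph V) (S : Set V) (v : V) : Prop :=
  ∃ M ∈ MaxS G S, ¬ Covers M v

lemma empty_mem_MSupp (G : SimpleGraph V) (S : Set V) : (∅ : Set (Sym2 V)) ∈ MSupp G S :=
  ⟨⟨Set.empty_subset _, Set.pairwise_empty _⟩, by simp⟩

lemma MSupp_mono (G : SimpleGraph V) {S T : Set V} (h : S ⊆ T) : MSupp G S ⊆ MSupp G T :=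
  fun M hM => ⟨hM.1, fun e he v hv => h (hM.2 e he v hv)⟩

lemma muS_setNonempty (G : SimpleGraph V) (S : Set V) :
    {n | ∃ M ∈ MSupp G S, M.ncard = n}.Nonempty :=
  ⟨0, ∅, empty_mem_MSupp G S, by simp⟩

lemma muS_setBdd (G : SimpleGraph V) (S : Set V) :
    BddAbove {n | ∃ M ∈ MSupp G S, M.ncard = n} := by
  refine ⟨(Set.univ : Set (Sym2 V)).ncard, ?_⟩
  rintro n ⟨M, _, rfl⟩
  exact Set.ncard_le_ncard (Set.subset_univ M) Set.finite_univ

lemma le_muS {G : SimpleGraph V} {S : Set V} {M : Set (Sym2 V)} (hM : M ∈ MSupp G S) :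
    M.ncard ≤ muS G S :=
  le_csSup (muS_setBdd G S) ⟨M, hM, rfl⟩

lemma muS_spec (G : SimpleGraph V) (S : Set V) : ∃ M ∈ MSupp G S, M.ncard = muS G S :=
  Nat.sSup_mem (muS_setNonempty G S) (muS_setBdd G S)

lemma MaxS_nonempty (G : SimpleGraph V) (S : Set V) : (MaxS G S).Nonempty := by
  obtain ⟨M, hM, hc⟩ := muS_spec G S
  exact ⟨M, hM, hc⟩

lemma mS_pos (G : SimpleGraph V) (S : Set V) : 1 ≤ mS G S := by
  rw [Nat.one_le_iff_ne_zero, mS, Ne, Set.ncard_eq_zero (Set.toFinite _)]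
  exact Set.nonempty_iff_ne_empty.mp (MaxS_nonempty G S)

lemma muS_mono (G : SimpleGraph V) {S T : Set V} (h : S ⊆ T) : muS G S ≤ muS G T := by
  obtain ⟨M, hM, hc⟩ := muS_spec G S
  rw [← hc]
  exact le_muS (MSupp_mono G h hM)

lemma MSupp_univ (G : SimpleGraph V) : MSupp G Set.univ = {M | IsMatchingSet G M} := by
  ext M; simp [MSupp]

lemma muS_univ (G : SimpleGraph V) : muS G Set.univ = matchNum G := by
  rw [muS, matchNum]
  congr 1
  ext n
  simp [MSupp_univ]

lemma MaxS_univ (G : SimpleGraph V) : MaxS G Set.univ = MaximumMatchings G := by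
  ext M
  simp [MaxS, MSupp_univ, muS_univ, MaximumMatchings]

lemma mS_univ (G : SimpleGraph V) : mS G Set.univ = mm G := by rw [mS, MaxS_univ, mm]

lemma TypeA_iff_PA_univ (G : SimpleGraph V) (v : V) : TypeA G v ↔ PA G Set.univ v := by
  rw [TypeA, PA, MaxS_univ]

/-- Graphs agreeing inside `S` have the same supported matchings. -/
lemma MSupp_congr {G G' : SimpleGraph V} {S : Set V}
    (h : ∀ a b, a ∈ S → b ∈ S → (G.Adj a b ↔ G'.Adj a b)) : MSupp G S = MSupp G' S := by
  have key : ∀ (G G' : SimpleGraph V), (∀ a b, a ∈ S → b ∈ S → (G.Adj a b → G'.Adj a b)) →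
      MSupp G S ⊆ MSupp G' S := by
    intro G G' h M hM
    refine ⟨⟨fun e he => ?_, hM.1.2⟩, hM.2⟩
    induction e with
    | _ a b =>
      have ha := hM.2 _ he a (by simp)
      have hb := hM.2 _ he b (by simp)
      have := hM.1.1 he
      rw [SimpleGraph.mem_edgeSet] at this ⊢
      exact h a b ha hb this
  exact Set.Subset.antisymm (key G G' fun a b ha hb => (h a b ha hb).mp)
    (key G' G fun a b ha hb => (h a b ha hb).mpr)

lemma muS_congr {G G' : SimpleGraph V} {S : Set V}
    (h : ∀ a b, a ∈ S → b ∈ S → (G.Adj a b ↔ G'.Adj a b)) : muS G S = muS G' S := by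
  rw [muS, muS, MSupp_congr h]

lemma MaxS_congr {G G' : SimpleGraph V} {S : Set V}
    (h : ∀ a b, a ∈ S → b ∈ S → (G.Adj a b ↔ G'.Adj a b)) : MaxS G S = MaxS G' S := by
  rw [MaxS, MaxS, MSupp_congr h, muS_congr h]

lemma mS_congr {G G' : SimpleGraph V} {S : Set V}
    (h : ∀ a b, a ∈ S → b ∈ S → (G.Adj a b ↔ G'.Adj a b)) : mS G S = mS G' S := by
  rw [mS, mS, MaxS_congr h]

lemma PA_congr {G G' : SimpleGraph V} {S : Set V} (v : V)
    (h : ∀ a b, a ∈ S → b ∈ S → (G.Adj a b ↔ G'.Adj a b)) : PA G S v ↔ PA G' S v := by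
  rw [PA, PA, MaxS_congr h]


/-! ### Transport between `G.induce S` and supported matchings -/

section Transport

variable (G : SimpleGraph V) (S : Set V)

lemma liftE_injective : Function.Injective (Sym2.map (Subtype.val : S → V)) :=
  Sym2.map.injective Subtype.val_injective

lemma mem_liftE {v : V} {e : Sym2 S} :
    v ∈ Sym2.map (Subtype.val : S → V) e ↔ ∃ u : S, u ∈ e ∧ (u : V) = v := by
  rw [Sym2.mem_map]

lemma covers_liftE (N : Set (Sym2 S)) (v : S) :
    Covers ((Sym2.map (Subtype.val : S → V)) '' N) (v : V) ↔ Covers N v := by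
  constructor
  · rintro ⟨e, ⟨e', he', rfl⟩, hv⟩
    obtain ⟨u, hu, huv⟩ := (mem_liftE S).mp hv
    cases Subtype.val_injective huv
    exact ⟨e', he', hu⟩
  · rintro ⟨e', he', hv⟩
    exact ⟨_, ⟨e', he', rfl⟩, (mem_liftE S).mpr ⟨v, hv, rfl⟩⟩

lemma isMatchingSet_liftE_iff (N : Set (Sym2 S)) :
    IsMatchingSet (G.induce S) N ↔ (Sym2.map (Subtype.val : S → V)) '' N ∈ MSupp G S := by
  constructor
  · rintro ⟨hsub, hpw⟩
    refine ⟨⟨?_, ?_⟩, ?_⟩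
    · rintro e ⟨e', he', rfl⟩
      induction e' with
      | _ a b =>
        have := hsub he'
        simpa using this
    · rintro e ⟨e', he', rfl⟩ f ⟨f', hf', rfl⟩ hne v ⟨hv1, hv2⟩
      have hne' : e' ≠ f' := fun h => hne (by rw [h])
      obtain ⟨u, hu, rfl⟩ := (mem_liftE S).mp hv1
      obtain ⟨u', hu', huu⟩ := (mem_liftE S).mp hv2
      cases Subtype.val_injective huu
      exact hpw he' hf' hne' u ⟨hu, hu'⟩
    · rintro e ⟨e', he', rfl⟩ v hv
      obtain ⟨u, _, rfl⟩ := (mem_liftE S).mp hv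
      exact u.2
  · rintro ⟨⟨hsub, hpw⟩, _⟩
    constructor
    · intro e' he'
      induction e' with
      | _ a b =>
        have := hsub ⟨_, he', rfl⟩
        simpa using this
    · intro e' he' f' hf' hne v ⟨hv1, hv2⟩
      refine hpw ⟨e', he', rfl⟩ ⟨f', hf', rfl⟩
        (fun h => hne (liftE_injective S h)) (v : V)
        ⟨(mem_liftE S).mpr ⟨v, hv1, rfl⟩, (mem_liftE S).mpr ⟨v, hv2, rfl⟩⟩

lemma mem_MSupp_range {M : Set (Sym2 V)} (hM : M ∈ MSupp G S) :
    ∃ N : Set (Sym2 S), (Sym2.map (Subtype.val : S → V)) '' N = M := by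
  refine ⟨(Sym2.map (Subtype.val : S → V)) ⁻¹' M, ?_⟩
  apply Set.image_preimage_eq_of_subset
  rintro e heM
  induction e with
  | _ a b =>
    have ha : a ∈ S := hM.2 _ heM a (by simp)
    have hb : b ∈ S := hM.2 _ heM b (by simp)
    exact ⟨s(⟨a, ha⟩, ⟨b, hb⟩), by simp⟩

lemma MSupp_eq_image :
    MSupp G S = (fun N => (Sym2.map (Subtype.val : S → V)) '' N) ''
      {N | IsMatchingSet (G.induce S) N} := by
  ext M
  constructor
  · intro hM
    obtain ⟨N, rfl⟩ := mem_MSupp_range G S hM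
    exact ⟨N, (isMatchingSet_liftE_iff G S N).mpr hM, rfl⟩
  · rintro ⟨N, hN, rfl⟩
    exact (isMatchingSet_liftE_iff G S N).mp hN

lemma matchNum_induce : matchNum (G.induce S) = muS G S := by
  rw [matchNum, muS]
  congr 1
  ext n
  constructor
  · rintro ⟨N, hN, rfl⟩
    exact ⟨_, (isMatchingSet_liftE_iff G S N).mp hN,
      Set.ncard_image_of_injective _ (liftE_injective S)⟩
  · rintro ⟨M, hM, rfl⟩
    obtain ⟨N, rfl⟩ := mem_MSupp_range G S hM
    exact ⟨N, (isMatchingSet_liftE_iff G S N).mpr hM,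
      (Set.ncard_image_of_injective _ (liftE_injective S)).symm⟩

lemma MaximumMatchings_induce :
    MaxS G S = (fun N => (Sym2.map (Subtype.val : S → V)) '' N) ''
      MaximumMatchings (G.induce S) := by
  ext M
  constructor
  · rintro ⟨hM, hc⟩
    obtain ⟨N, rfl⟩ := mem_MSupp_range G S hM
    refine ⟨N, ⟨(isMatchingSet_liftE_iff G S N).mpr hM, ?_⟩, rfl⟩
    rw [matchNum_induce, ← hc, Set.ncard_image_of_injective _ (liftE_injective S)]
  · rintro ⟨N, ⟨hN, hc⟩, rfl⟩
    refine ⟨(isMatchingSet_liftE_iff G S N).mp hN, ?_⟩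
    rw [Set.ncard_image_of_injective _ (liftE_injective S), hc, matchNum_induce]

lemma mm_induce : mm (G.induce S) = mS G S := by
  rw [mm, mS, MaximumMatchings_induce]
  exact (Set.ncard_image_of_injective _ (Set.image_injective.mpr (liftE_injective S))).symm

lemma typeA_induce (v : V) (hv : v ∈ S) :
    TypeA (G.induce S) ⟨v, hv⟩ ↔ PA G S v := by
  constructor
  · rintro ⟨N, hN, hcov⟩
    refine ⟨_, by rw [MaximumMatchings_induce]; exact ⟨N, hN, rfl⟩, ?_⟩
    rw [show v = ((⟨v, hv⟩ : S) : V) from rfl, covers_liftE]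
    exact hcov
  · rintro ⟨M, hM, hcov⟩
    rw [MaximumMatchings_induce] at hM
    obtain ⟨N, hN, rfl⟩ := hM
    refine ⟨N, hN, fun hc => hcov ?_⟩
    rw [show v = ((⟨v, hv⟩ : S) : V) from rfl, covers_liftE]
    exact hc

end Transport


/-! ### Deleting one vertex from the support -/

section Delete

variable {G : SimpleGraph V} {S : Set V} {v : V}

lemma matching_edge_unique {M : Set (Sym2 V)} (hM : IsMatchingSet G M)
    {e f : Sym2 V} (he : e ∈ M) (hf : f ∈ M) {v : V} (hv : v ∈ e) (hv' : v ∈ f) : e = f := by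
  by_contra hne
  exact hM.2 he hf hne v ⟨hv, hv'⟩

lemma not_covers_of_supported {M : Set (Sym2 V)} (hM : M ∈ MSupp G (S \ {v})) :
    ¬ Covers M v := by
  rintro ⟨e, he, hv⟩
  exact (hM.2 e he v hv).2 rfl

lemma mem_MSupp_diff_of_not_covers {M : Set (Sym2 V)} (hM : M ∈ MSupp G S)
    (h : ¬ Covers M v) : M ∈ MSupp G (S \ {v}) := by
  refine ⟨hM.1, fun e he w hw => ⟨hM.2 e he w hw, fun hwv => h ⟨e, he, hwv ▸ hw⟩⟩⟩

lemma muS_le_del_add_one (G : SimpleGraph V) (S : Set V) (v : V) :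
    muS G S ≤ muS G (S \ {v}) + 1 := by
  obtain ⟨M, hM, hc⟩ := muS_spec G S
  by_cases hcov : Covers M v
  · obtain ⟨e, he, hv⟩ := hcov
    have hM' : M \ {e} ∈ MSupp G (S \ {v}) := by
      refine ⟨⟨fun f hf => hM.1.1 hf.1, hM.1.2.mono Set.diff_subset⟩, ?_⟩
      rintro f ⟨hf, hfe⟩ w hw
      refine ⟨hM.2 f hf w hw, fun hwv => ?_⟩
      exact hfe (matching_edge_unique hM.1 hf he (hwv ▸ hw) hv)
    have : (M \ {e}).ncard + 1 = M.ncard := by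
      rw [Set.ncard_diff_singleton_add_one he (Set.toFinite _)]
    calc muS G S = (M \ {e}).ncard + 1 := by rw [this, hc]
    _ ≤ muS G (S \ {v}) + 1 := by exact Nat.add_le_add_right (le_muS hM') 1
  · calc muS G S = M.ncard := hc.symm
    _ ≤ muS G (S \ {v}) := le_muS (mem_MSupp_diff_of_not_covers hM hcov)
    _ ≤ muS G (S \ {v}) + 1 := Nat.le_succ _

lemma PA_iff_muS_del_eq (G : SimpleGraph V) (S : Set V) (v : V) :
    PA G S v ↔ muS G (S \ {v}) = muS G S := by
  constructor
  · rintro ⟨M, ⟨hM, hc⟩, hcov⟩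
    refine le_antisymm (muS_mono G Set.diff_subset) ?_
    rw [← hc]
    exact le_muS (mem_MSupp_diff_of_not_covers hM hcov)
  · intro h
    obtain ⟨M, hM, hc⟩ := muS_spec G (S \ {v})
    exact ⟨M, ⟨MSupp_mono G Set.diff_subset hM, by rw [hc, h]⟩,
      not_covers_of_supported hM⟩

lemma not_PA_iff_muS_del (G : SimpleGraph V) (S : Set V) (v : V) :
    ¬ PA G S v ↔ muS G (S \ {v}) + 1 = muS G S := by
  rw [PA_iff_muS_del_eq]
  have h1 := muS_mono G (Set.diff_subset : S \ {v} ⊆ S)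
  have h2 := muS_le_del_add_one G S v
  omega

lemma MaxS_del_subset_of_PA (h : PA G S v) : MaxS G (S \ {v}) ⊆ MaxS G S := by
  rintro M ⟨hM, hc⟩
  exact ⟨MSupp_mono G Set.diff_subset hM, by rw [hc, (PA_iff_muS_del_eq G S v).mp h]⟩

lemma mS_del_le_of_PA (h : PA G S v) : mS G (S \ {v}) ≤ mS G S :=
  Set.ncard_le_ncard (MaxS_del_subset_of_PA h) (Set.toFinite _)

end Delete


/-! ### Splitting along a bridge -/

lemma sym2_exists_mem {α : Type*} (e : Sym2 α) : ∃ w, w ∈ e := by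
  induction e with
  | _ a b => exact ⟨a, by simp⟩

lemma ncard_sprod {α β : Type*} [Finite α] [Finite β] (A : Set α) (B : Set β) :
    (A ×ˢ B).ncard = A.ncard * B.ncard := by
  rw [← Nat.card_coe_set_eq, ← Nat.card_coe_set_eq, ← Nat.card_coe_set_eq,
    Nat.card_congr (Equiv.Set.prod A B), Nat.card_prod]

/-- The bridge-splitting context: `X, Y` partition `V`, `s ∈ X`, `t ∈ Y`, `st` is an edge and
is the unique edge between `X` and `Y`. -/
structure Split (G : SimpleGraph V) (X Y : Set V) (s t : V) : Prop where
  adj : G.Adj s t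
  hsX : s ∈ X
  htY : t ∈ Y
  disj : Disjoint X Y
  cover : X ∪ Y = Set.univ
  cross : ∀ ⦃a b⦄, G.Adj a b → a ∈ X → b ∈ Y → a = s ∧ b = t

namespace Split

variable {G : SimpleGraph V} {X Y : Set V} {s t : V}

lemma symm (h : Split G X Y s t) : Split G Y X t s where
  adj := h.adj.symm
  hsX := h.htY
  htY := h.hsX
  disj := h.disj.symm
  cover := by rw [Set.union_comm]; exact h.cover
  cross := fun a b hab ha hb => by
    obtain ⟨h1, h2⟩ := h.cross hab.symm hb ha
    exact ⟨h2, h1⟩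

lemma not_mem_Y_of_mem_X (h : Split G X Y s t) {x : V} (hx : x ∈ X) : x ∉ Y :=
  fun hy => Set.disjoint_left.mp h.disj hx hy

lemma mem_or (h : Split G X Y s t) (x : V) : x ∈ X ∨ x ∈ Y := by
  have : x ∈ X ∪ Y := by rw [h.cover]; trivial
  exact this

/-- classification of edges -/
lemma edge_class (h : Split G X Y s t) {e : Sym2 V} (he : e ∈ G.edgeSet) :
    (∀ w ∈ e, w ∈ X) ∨ (∀ w ∈ e, w ∈ Y) ∨ e = s(s, t) := by
  induction e with
  | _ a b =>
    rw [SimpleGraph.mem_edgeSet] at he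
    rcases h.mem_or a with ha | ha <;> rcases h.mem_or b with hb | hb
    · left; intro w hw; rcases Sym2.mem_iff.mp hw with rfl | rfl <;> assumption
    · obtain ⟨rfl, rfl⟩ := h.cross he ha hb
      right; right; rfl
    · obtain ⟨rfl, rfl⟩ := h.cross he.symm hb ha
      right; right; exact Sym2.eq_swap
    · right; left; intro w hw; rcases Sym2.mem_iff.mp hw with rfl | rfl <;> assumption

/-- the `X`-part of a matching -/
def partX (X : Set V) (M : Set (Sym2 V)) : Set (Sym2 V) := {e ∈ M | ∀ w ∈ e, w ∈ X}

lemma partX_subset (X : Set V) (M : Set (Sym2 V)) : partX X M ⊆ M := fun _ he => he.1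

lemma part_disj (h : Split G X Y s t) (M M' : Set (Sym2 V)) :
    Disjoint (partX X M) (partX Y M') := by
  rw [Set.disjoint_left]
  rintro e ⟨_, heX⟩ ⟨_, heY⟩
  obtain ⟨w, hw⟩ := sym2_exists_mem e
  exact h.not_mem_Y_of_mem_X (heX w hw) (heY w hw)

lemma part_mem_MSupp (h : Split G X Y s t) {M : Set (Sym2 V)} (hM : IsMatchingSet G M) :
    partX X M ∈ MSupp G X :=
  ⟨⟨fun e he => hM.1 he.1, hM.2.mono (partX_subset X M)⟩, fun e he => he.2⟩

lemma split_eq_of_not_mem (h : Split G X Y s t) {M : Set (Sym2 V)} (hM : IsMatchingSet G M)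
    (he : s(s, t) ∉ M) : M = partX X M ∪ partX Y M := by
  ext e
  constructor
  · intro heM
    rcases h.edge_class (hM.1 heM) with hc | hc | hc
    · exact Or.inl ⟨heM, hc⟩
    · exact Or.inr ⟨heM, hc⟩
    · exact absurd (hc ▸ heM) he
  · rintro (he | he) <;> exact he.1

lemma split_eq_of_mem (h : Split G X Y s t) {M : Set (Sym2 V)} (hM : IsMatchingSet G M)
    (he : s(s, t) ∈ M) : M = insert s(s, t) (partX X M ∪ partX Y M) := by
  ext e
  constructor
  · intro heM
    rcases h.edge_class (hM.1 heM) with hc | hc | hc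
    · exact Or.inr (Or.inl ⟨heM, hc⟩)
    · exact Or.inr (Or.inr ⟨heM, hc⟩)
    · exact Or.inl hc
  · rintro (rfl | he | he)
    · exact he
    · exact he.1
    · exact he.1

lemma e0_not_mem_partX (h : Split G X Y s t) (M : Set (Sym2 V)) : s(s, t) ∉ partX X M := by
  rintro ⟨_, hX⟩
  exact h.not_mem_Y_of_mem_X (hX t (by simp)) h.htY

lemma e0_not_mem_partY (h : Split G X Y s t) (M : Set (Sym2 V)) : s(s, t) ∉ partX Y M := by
  rintro ⟨_, hY⟩
  exact h.not_mem_Y_of_mem_X h.hsX (hY s (by simp))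

lemma part_mem_MSupp_del (h : Split G X Y s t) {M : Set (Sym2 V)} (hM : IsMatchingSet G M)
    (he : s(s, t) ∈ M) : partX X M ∈ MSupp G (X \ {s}) := by
  refine ⟨(h.part_mem_MSupp hM).1, fun e heM w hw => ⟨heM.2 w hw, fun hws => ?_⟩⟩
  have hne : e ≠ s(s, t) := fun hc => h.e0_not_mem_partX M (hc ▸ heM)
  exact hM.2 heM.1 he hne w ⟨hw, by simp [Set.mem_singleton_iff.mp hws]⟩

/-- ncard splitting for a matching not containing the bridge -/
lemma ncard_split_not_mem (h : Split G X Y s t) {M : Set (Sym2 V)} (hM : IsMatchingSet G M)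
    (he : s(s, t) ∉ M) : M.ncard = (partX X M).ncard + (partX Y M).ncard := by
  conv_lhs => rw [h.split_eq_of_not_mem hM he]
  exact Set.ncard_union_eq (h.part_disj M M) (Set.toFinite _) (Set.toFinite _)

lemma ncard_split_mem (h : Split G X Y s t) {M : Set (Sym2 V)} (hM : IsMatchingSet G M)
    (he : s(s, t) ∈ M) :
    M.ncard = (partX X M).ncard + (partX Y M).ncard + 1 := by
  conv_lhs => rw [h.split_eq_of_mem hM he]
  rw [Set.ncard_insert_of_notMem (by
    rintro (hc | hc)
    · exact h.e0_not_mem_partX M hc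
    · exact h.e0_not_mem_partY M hc) (Set.toFinite _),
    Set.ncard_union_eq (h.part_disj M M) (Set.toFinite _) (Set.toFinite _)]

/-- combining matchings supported on the two sides -/
lemma union_mem_MSupp (h : Split G X Y s t) {M₁ M₂ : Set (Sym2 V)}
    (h₁ : M₁ ∈ MSupp G X) (h₂ : M₂ ∈ MSupp G Y) : M₁ ∪ M₂ ∈ MSupp G Set.univ := by
  refine ⟨⟨Set.union_subset h₁.1.1 h₂.1.1, ?_⟩, fun e _ w _ => trivial⟩
  rintro e (he | he) f (hf | hf) hne w ⟨hw1, hw2⟩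
  · exact h₁.1.2 he hf hne w ⟨hw1, hw2⟩
  · exact h.not_mem_Y_of_mem_X (h₁.2 e he w hw1) (h₂.2 f hf w hw2)
  · exact h.not_mem_Y_of_mem_X (h₁.2 f hf w hw2) (h₂.2 e he w hw1)
  · exact h₂.1.2 he hf hne w ⟨hw1, hw2⟩

lemma union_disjoint (h : Split G X Y s t) {M₁ M₂ : Set (Sym2 V)}
    (h₁ : M₁ ∈ MSupp G X) (h₂ : M₂ ∈ MSupp G Y) : Disjoint M₁ M₂ := by
  rw [Set.disjoint_left]
  intro e he1 he2
  obtain ⟨w, hw⟩ := sym2_exists_mem e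
  exact h.not_mem_Y_of_mem_X (h₁.2 e he1 w hw) (h₂.2 e he2 w hw)

lemma union_ncard (h : Split G X Y s t) {M₁ M₂ : Set (Sym2 V)}
    (h₁ : M₁ ∈ MSupp G X) (h₂ : M₂ ∈ MSupp G Y) :
    (M₁ ∪ M₂).ncard = M₁.ncard + M₂.ncard :=
  Set.ncard_union_eq (h.union_disjoint h₁ h₂) (Set.toFinite _) (Set.toFinite _)

lemma e0_not_mem_union (h : Split G X Y s t) {M₁ M₂ : Set (Sym2 V)}
    (h₁ : M₁ ∈ MSupp G X) (h₂ : M₂ ∈ MSupp G Y) : s(s, t) ∉ M₁ ∪ M₂ := by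
  rintro (hc | hc)
  · exact h.not_mem_Y_of_mem_X (h₁.2 _ hc t (by simp)) h.htY
  · exact h.not_mem_Y_of_mem_X h.hsX (h₂.2 _ hc s (by simp))

lemma insert_mem_MSupp (h : Split G X Y s t) {M₁ M₂ : Set (Sym2 V)}
    (h₁ : M₁ ∈ MSupp G (X \ {s})) (h₂ : M₂ ∈ MSupp G (Y \ {t})) :
    insert s(s, t) (M₁ ∪ M₂) ∈ MSupp G Set.univ := by
  have h₁' : M₁ ∈ MSupp G X := MSupp_mono G Set.diff_subset h₁
  have h₂' : M₂ ∈ MSupp G Y := MSupp_mono G Set.diff_subset h₂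
  have hu := h.union_mem_MSupp h₁' h₂'
  refine ⟨⟨Set.insert_subset ((SimpleGraph.mem_edgeSet G).mpr h.adj) hu.1.1, ?_⟩,
    fun e _ w _ => trivial⟩
  have key : ∀ f ∈ M₁ ∪ M₂, ∀ w, w ∈ s(s, t) → w ∈ f → False := by
    rintro f hf w hw hwf
    rcases Sym2.mem_iff.mp hw with rfl | rfl
    · rcases hf with hf | hf
      · exact (h₁.2 f hf w hwf).2 rfl
      · exact h.not_mem_Y_of_mem_X h.hsX (h₂'.2 f hf w hwf)
    · rcases hf with hf | hf
      · exact h.not_mem_Y_of_mem_X (h₁'.2 f hf w hwf) h.htY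
      · exact (h₂.2 f hf w hwf).2 rfl
  rintro e (rfl | he) f (rfl | hf) hne w ⟨hw1, hw2⟩
  · exact hne rfl
  · exact key f hf w hw1 hw2
  · exact key e he w hw2 hw1
  · exact hu.1.2 he hf hne w ⟨hw1, hw2⟩

lemma insert_ncard (h : Split G X Y s t) {M₁ M₂ : Set (Sym2 V)}
    (h₁ : M₁ ∈ MSupp G (X \ {s})) (h₂ : M₂ ∈ MSupp G (Y \ {t})) :
    (insert s(s, t) (M₁ ∪ M₂)).ncard = M₁.ncard + M₂.ncard + 1 := by
  have h₁' : M₁ ∈ MSupp G X := MSupp_mono G Set.diff_subset h₁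
  have h₂' : M₂ ∈ MSupp G Y := MSupp_mono G Set.diff_subset h₂
  rw [Set.ncard_insert_of_notMem (h.e0_not_mem_union h₁' h₂') (Set.toFinite _),
    h.union_ncard h₁' h₂']


/-! ### matching number across the bridge -/

lemma mu_ge_union (h : Split G X Y s t) : muS G X + muS G Y ≤ muS G Set.univ := by
  obtain ⟨M₁, h₁, hc₁⟩ := muS_spec G X
  obtain ⟨M₂, h₂, hc₂⟩ := muS_spec G Y
  rw [← hc₁, ← hc₂, ← h.union_ncard h₁ h₂]
  exact le_muS (h.union_mem_MSupp h₁ h₂)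

lemma mu_ge_insert (h : Split G X Y s t) :
    muS G (X \ {s}) + muS G (Y \ {t}) + 1 ≤ muS G Set.univ := by
  obtain ⟨M₁, h₁, hc₁⟩ := muS_spec G (X \ {s})
  obtain ⟨M₂, h₂, hc₂⟩ := muS_spec G (Y \ {t})
  rw [← hc₁, ← hc₂, ← h.insert_ncard h₁ h₂]
  exact le_muS (h.insert_mem_MSupp h₁ h₂)

lemma partY_mem_MSupp (h : Split G X Y s t) {M : Set (Sym2 V)} (hM : IsMatchingSet G M) :
    partX Y M ∈ MSupp G Y := h.symm.part_mem_MSupp hM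

lemma partY_mem_MSupp_del (h : Split G X Y s t) {M : Set (Sym2 V)} (hM : IsMatchingSet G M)
    (he : s(s, t) ∈ M) : partX Y M ∈ MSupp G (Y \ {t}) :=
  h.symm.part_mem_MSupp_del hM (Sym2.eq_swap ▸ he)

lemma mu_le (h : Split G X Y s t) :
    muS G Set.univ ≤ max (muS G X + muS G Y)
      (muS G (X \ {s}) + muS G (Y \ {t}) + 1) := by
  obtain ⟨M, hM, hc⟩ := muS_spec G Set.univ
  rw [← hc]
  by_cases he : s(s, t) ∈ M
  · refine le_max_of_le_right ?_
    rw [h.ncard_split_mem hM.1 he]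
    have := le_muS (h.part_mem_MSupp_del hM.1 he)
    have := le_muS (h.partY_mem_MSupp_del hM.1 he)
    omega
  · refine le_max_of_le_left ?_
    rw [h.ncard_split_not_mem hM.1 he]
    have := le_muS (h.part_mem_MSupp hM.1)
    have := le_muS (h.partY_mem_MSupp hM.1)
    omega

/-! ### recovering the two parts -/

lemma partX_union_eq (h : Split G X Y s t) {M₁ M₂ : Set (Sym2 V)}
    (h₁ : M₁ ∈ MSupp G X) (h₂ : M₂ ∈ MSupp G Y) :
    partX X (M₁ ∪ M₂) = M₁ ∧ partX Y (M₁ ∪ M₂) = M₂ := by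
  constructor
  · ext e
    constructor
    · rintro ⟨he | he, hX⟩
      · exact he
      · obtain ⟨w, hw⟩ := sym2_exists_mem e
        exact absurd (h₂.2 e he w hw) (fun hy => h.not_mem_Y_of_mem_X (hX w hw) hy)
    · intro he
      exact ⟨Or.inl he, h₁.2 e he⟩
  · ext e
    constructor
    · rintro ⟨he | he, hY⟩
      · obtain ⟨w, hw⟩ := sym2_exists_mem e
        exact absurd (hY w hw) (h.not_mem_Y_of_mem_X (h₁.2 e he w hw))
      · exact he
    · intro he
      exact ⟨Or.inr he, h₂.2 e he⟩

lemma partX_insert_e0 (h : Split G X Y s t) (A : Set (Sym2 V)) :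
    partX X (insert s(s, t) A) = partX X A := by
  ext e
  simp only [partX, Set.mem_setOf_eq, Set.mem_insert_iff]
  constructor
  · rintro ⟨rfl | he, hX⟩
    · exact absurd (hX t (by simp)) (fun hy => h.not_mem_Y_of_mem_X hy h.htY)
    · exact ⟨he, hX⟩
  · rintro ⟨he, hX⟩
    exact ⟨Or.inr he, hX⟩

lemma partY_insert_e0 (h : Split G X Y s t) (A : Set (Sym2 V)) :
    partX Y (insert s(s, t) A) = partX Y A := by
  ext e
  simp only [partX, Set.mem_setOf_eq, Set.mem_insert_iff]
  constructor
  · rintro ⟨rfl | he, hY⟩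
    · exact absurd (hY s (by simp)) (fun hy => h.not_mem_Y_of_mem_X h.hsX hy)
    · exact ⟨he, hY⟩
  · rintro ⟨he, hY⟩
    exact ⟨Or.inr he, hY⟩

lemma partX_insert_eq (h : Split G X Y s t) {M₁ M₂ : Set (Sym2 V)}
    (h₁ : M₁ ∈ MSupp G (X \ {s})) (h₂ : M₂ ∈ MSupp G (Y \ {t})) :
    partX X (insert s(s, t) (M₁ ∪ M₂)) = M₁ ∧
      partX Y (insert s(s, t) (M₁ ∪ M₂)) = M₂ := by
  have h₁' : M₁ ∈ MSupp G X := MSupp_mono G Set.diff_subset h₁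
  have h₂' : M₂ ∈ MSupp G Y := MSupp_mono G Set.diff_subset h₂
  obtain ⟨e1, e2⟩ := h.partX_union_eq h₁' h₂'
  rw [h.partX_insert_e0, h.partY_insert_e0]
  exact ⟨e1, e2⟩

/-! ### the three cases -/

section Cases

variable (h : Split G X Y s t)
include h

/-- Case both sides of type A: every maximum matching uses the bridge. -/
lemma muS_univ_AA (ha : PA G X s) (hb : PA G Y t) :
    muS G Set.univ = muS G (X \ {s}) + muS G (Y \ {t}) + 1 := by
  have eX := (PA_iff_muS_del_eq G X s).mp ha
  have eY := (PA_iff_muS_del_eq G Y t).mp hb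
  have h1 := h.mu_le
  have h2 := h.mu_ge_insert
  rw [eX, eY] at h1 ⊢
  omega

lemma MaxS_univ_AA (ha : PA G X s) (hb : PA G Y t) :
    MaxS G Set.univ = (fun p : Set (Sym2 V) × Set (Sym2 V) => insert s(s, t) (p.1 ∪ p.2)) ''
      (MaxS G (X \ {s}) ×ˢ MaxS G (Y \ {t})) := by
  have eX := (PA_iff_muS_del_eq G X s).mp ha
  have eY := (PA_iff_muS_del_eq G Y t).mp hb
  have hmu := h.muS_univ_AA ha hb
  ext M
  constructor
  · rintro ⟨hM, hc⟩
    have he : s(s, t) ∈ M := by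
      by_contra he
      have hsplit := h.ncard_split_not_mem hM.1 he
      have b1 := le_muS (h.part_mem_MSupp hM.1)
      have b2 := le_muS (h.partY_mem_MSupp hM.1)
      rw [hmu] at hc
      omega
    have hsplit := h.ncard_split_mem hM.1 he
    have m1 := h.part_mem_MSupp_del hM.1 he
    have m2 := h.partY_mem_MSupp_del hM.1 he
    have b1 := le_muS m1
    have b2 := le_muS m2
    rw [hmu] at hc
    have mem1 : partX X M ∈ MaxS G (X \ {s}) := ⟨m1, by omega⟩
    have mem2 : partX Y M ∈ MaxS G (Y \ {t}) := ⟨m2, by omega⟩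
    refine ⟨(partX X M, partX Y M), ⟨mem1, mem2⟩, ?_⟩
    exact (h.split_eq_of_mem hM.1 he).symm
  · rintro ⟨⟨M₁, M₂⟩, ⟨⟨h₁, hc₁⟩, ⟨h₂, hc₂⟩⟩, rfl⟩
    refine ⟨h.insert_mem_MSupp h₁ h₂, ?_⟩
    rw [h.insert_ncard h₁ h₂, hc₁, hc₂, hmu]

lemma mS_image_insert (P : Set (Set (Sym2 V) × Set (Sym2 V)))
    (hP : P ⊆ MSupp G (X \ {s}) ×ˢ MSupp G (Y \ {t})) :
    ((fun p : Set (Sym2 V) × Set (Sym2 V) => insert s(s, t) (p.1 ∪ p.2)) '' P).ncard =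
      P.ncard := by
  apply Set.ncard_image_of_injOn
  rintro ⟨M₁, M₂⟩ hp ⟨N₁, N₂⟩ hq heq
  obtain ⟨hp1, hp2⟩ := hP hp
  obtain ⟨hq1, hq2⟩ := hP hq
  dsimp only at hp1 hp2 hq1 hq2 heq
  have hA : M₁ = N₁ := by
    rw [← (h.partX_insert_eq hp1 hp2).1, ← (h.partX_insert_eq hq1 hq2).1, heq]
  have hB : M₂ = N₂ := by
    rw [← (h.partX_insert_eq hp1 hp2).2, ← (h.partX_insert_eq hq1 hq2).2, heq]
  rw [hA, hB]

lemma mS_image_union (P : Set (Set (Sym2 V) × Set (Sym2 V)))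
    (hP : P ⊆ MSupp G X ×ˢ MSupp G Y) :
    ((fun p : Set (Sym2 V) × Set (Sym2 V) => p.1 ∪ p.2) '' P).ncard = P.ncard := by
  apply Set.ncard_image_of_injOn
  rintro ⟨M₁, M₂⟩ hp ⟨N₁, N₂⟩ hq heq
  obtain ⟨hp1, hp2⟩ := hP hp
  obtain ⟨hq1, hq2⟩ := hP hq
  dsimp only at hp1 hp2 hq1 hq2 heq
  have hA : M₁ = N₁ := by
    rw [← (h.partX_union_eq hp1 hp2).1, ← (h.partX_union_eq hq1 hq2).1, heq]
  have hB : M₂ = N₂ := by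
    rw [← (h.partX_union_eq hp1 hp2).2, ← (h.partX_union_eq hq1 hq2).2, heq]
  rw [hA, hB]

lemma mS_univ_AA (ha : PA G X s) (hb : PA G Y t) :
    mS G Set.univ = mS G (X \ {s}) * mS G (Y \ {t}) := by
  rw [mS, h.MaxS_univ_AA ha hb, h.mS_image_insert _
    (Set.prod_mono (fun M hM => hM.1) (fun M hM => hM.1)), ncard_sprod]
  rfl

lemma not_PA_univ_AA (ha : PA G X s) (hb : PA G Y t) :
    ¬ PA G Set.univ s ∧ ¬ PA G Set.univ t := by
  have key : ∀ M ∈ MaxS G Set.univ, s(s, t) ∈ M := by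
    intro M hM
    rw [h.MaxS_univ_AA ha hb] at hM
    obtain ⟨p, _, rfl⟩ := hM
    exact Set.mem_insert _ _
  constructor
  · rintro ⟨M, hM, hcov⟩
    exact hcov ⟨s(s, t), key M hM, by simp⟩
  · rintro ⟨M, hM, hcov⟩
    exact hcov ⟨s(s, t), key M hM, by simp⟩

/-- Case both sides of type B: no maximum matching uses the bridge. -/
lemma muS_univ_BB (ha : ¬ PA G X s) (hb : ¬ PA G Y t) :
    muS G Set.univ = muS G X + muS G Y := by
  have eX := (not_PA_iff_muS_del G X s).mp ha
  have eY := (not_PA_iff_muS_del G Y t).mp hb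
  have h1 := h.mu_le
  have h2 := h.mu_ge_union
  omega

lemma MaxS_univ_BB (ha : ¬ PA G X s) (hb : ¬ PA G Y t) :
    MaxS G Set.univ = (fun p : Set (Sym2 V) × Set (Sym2 V) => p.1 ∪ p.2) ''
      (MaxS G X ×ˢ MaxS G Y) := by
  have eX := (not_PA_iff_muS_del G X s).mp ha
  have eY := (not_PA_iff_muS_del G Y t).mp hb
  have hmu := h.muS_univ_BB ha hb
  ext M
  constructor
  · rintro ⟨hM, hc⟩
    have he : s(s, t) ∉ M := by
      intro he
      have hsplit := h.ncard_split_mem hM.1 he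
      have b1 := le_muS (h.part_mem_MSupp_del hM.1 he)
      have b2 := le_muS (h.partY_mem_MSupp_del hM.1 he)
      rw [hmu] at hc
      omega
    have hsplit := h.ncard_split_not_mem hM.1 he
    have m1 := h.part_mem_MSupp hM.1
    have m2 := h.partY_mem_MSupp hM.1
    have b1 := le_muS m1
    have b2 := le_muS m2
    rw [hmu] at hc
    have mem1 : partX X M ∈ MaxS G X := ⟨m1, by omega⟩
    have mem2 : partX Y M ∈ MaxS G Y := ⟨m2, by omega⟩
    refine ⟨(partX X M, partX Y M), ⟨mem1, mem2⟩, ?_⟩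
    exact (h.split_eq_of_not_mem hM.1 he).symm
  · rintro ⟨⟨M₁, M₂⟩, ⟨⟨h₁, hc₁⟩, ⟨h₂, hc₂⟩⟩, rfl⟩
    refine ⟨h.union_mem_MSupp h₁ h₂, ?_⟩
    rw [h.union_ncard h₁ h₂, hc₁, hc₂, hmu]

lemma mS_univ_BB (ha : ¬ PA G X s) (hb : ¬ PA G Y t) :
    mS G Set.univ = mS G X * mS G Y := by
  rw [mS, h.MaxS_univ_BB ha hb, h.mS_image_union _
    (Set.prod_mono (fun M hM => hM.1) (fun M hM => hM.1)), ncard_sprod]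
  rfl

lemma not_PA_univ_BB (ha : ¬ PA G X s) (hb : ¬ PA G Y t) :
    ¬ PA G Set.univ s ∧ ¬ PA G Set.univ t := by
  have key : ∀ M ∈ MaxS G Set.univ, Covers M s ∧ Covers M t := by
    intro M hM
    rw [h.MaxS_univ_BB ha hb] at hM
    obtain ⟨⟨M₁, M₂⟩, ⟨h₁, h₂⟩, rfl⟩ := hM
    constructor
    · have : ∀ N ∈ MaxS G X, Covers N s := by
        intro N hN
        by_contra hc
        exact ha ⟨N, hN, hc⟩
      obtain ⟨e, he, hs⟩ := this M₁ h₁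
      exact ⟨e, Or.inl he, hs⟩
    · have : ∀ N ∈ MaxS G Y, Covers N t := by
        intro N hN
        by_contra hc
        exact hb ⟨N, hN, hc⟩
      obtain ⟨e, he, ht⟩ := this M₂ h₂
      exact ⟨e, Or.inr he, ht⟩
  exact ⟨fun ⟨M, hM, hcov⟩ => hcov (key M hM).1, fun ⟨M, hM, hcov⟩ => hcov (key M hM).2⟩

/-- Case `s` of type A, `t` of type B. -/
lemma muS_univ_AB (ha : PA G X s) (hb : ¬ PA G Y t) :
    muS G Set.univ = muS G X + muS G Y := by
  have eX := (PA_iff_muS_del_eq G X s).mp ha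
  have eY := (not_PA_iff_muS_del G Y t).mp hb
  have h1 := h.mu_le
  have h2 := h.mu_ge_union
  omega

lemma MaxS_univ_AB (ha : PA G X s) (hb : ¬ PA G Y t) :
    MaxS G Set.univ =
      ((fun p : Set (Sym2 V) × Set (Sym2 V) => p.1 ∪ p.2) '' (MaxS G X ×ˢ MaxS G Y)) ∪
      ((fun p : Set (Sym2 V) × Set (Sym2 V) => insert s(s, t) (p.1 ∪ p.2)) ''
        (MaxS G (X \ {s}) ×ˢ MaxS G (Y \ {t}))) := by
  have eX := (PA_iff_muS_del_eq G X s).mp ha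
  have eY := (not_PA_iff_muS_del G Y t).mp hb
  have hmu := h.muS_univ_AB ha hb
  ext M
  constructor
  · rintro ⟨hM, hc⟩
    rw [hmu] at hc
    by_cases he : s(s, t) ∈ M
    · have hsplit := h.ncard_split_mem hM.1 he
      have m1 := h.part_mem_MSupp_del hM.1 he
      have m2 := h.partY_mem_MSupp_del hM.1 he
      have b1 := le_muS m1
      have b2 := le_muS m2
      have mem1 : partX X M ∈ MaxS G (X \ {s}) := ⟨m1, by omega⟩
      have mem2 : partX Y M ∈ MaxS G (Y \ {t}) := ⟨m2, by omega⟩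
      refine Or.inr ⟨(partX X M, partX Y M), ⟨mem1, mem2⟩, ?_⟩
      exact (h.split_eq_of_mem hM.1 he).symm
    · have hsplit := h.ncard_split_not_mem hM.1 he
      have m1 := h.part_mem_MSupp hM.1
      have m2 := h.partY_mem_MSupp hM.1
      have b1 := le_muS m1
      have b2 := le_muS m2
      have mem1 : partX X M ∈ MaxS G X := ⟨m1, by omega⟩
      have mem2 : partX Y M ∈ MaxS G Y := ⟨m2, by omega⟩
      refine Or.inl ⟨(partX X M, partX Y M), ⟨mem1, mem2⟩, ?_⟩
      exact (h.split_eq_of_not_mem hM.1 he).symm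
  · rintro (⟨⟨M₁, M₂⟩, ⟨⟨h₁, hc₁⟩, ⟨h₂, hc₂⟩⟩, rfl⟩ | ⟨⟨M₁, M₂⟩, ⟨⟨h₁, hc₁⟩, ⟨h₂, hc₂⟩⟩, rfl⟩)
    · refine ⟨h.union_mem_MSupp h₁ h₂, ?_⟩
      rw [h.union_ncard h₁ h₂, hc₁, hc₂, hmu]
    · refine ⟨h.insert_mem_MSupp h₁ h₂, ?_⟩
      rw [h.insert_ncard h₁ h₂, hc₁, hc₂, hmu]
      omega

lemma mS_univ_AB (ha : PA G X s) (hb : ¬ PA G Y t) :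
    mS G Set.univ = mS G X * mS G Y + mS G (X \ {s}) * mS G (Y \ {t}) := by
  rw [mS, h.MaxS_univ_AB ha hb]
  rw [Set.ncard_union_eq ?dis (Set.toFinite _) (Set.toFinite _),
    h.mS_image_union _ (Set.prod_mono (fun M hM => hM.1) (fun M hM => hM.1)),
    h.mS_image_insert _ (Set.prod_mono (fun M hM => hM.1) (fun M hM => hM.1)),
    ncard_sprod, ncard_sprod]
  · rfl
  case dis =>
    rw [Set.disjoint_left]
    rintro M ⟨⟨M₁, M₂⟩, ⟨h₁, h₂⟩, rfl⟩ ⟨⟨N₁, N₂⟩, ⟨g₁, g₂⟩, heq⟩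
    dsimp only at h₁ h₂ heq
    have : s(s, t) ∈ M₁ ∪ M₂ := by rw [← heq]; exact Set.mem_insert _ _
    exact h.e0_not_mem_union h₁.1 h₂.1 this

lemma PA_univ_AB (ha : PA G X s) (hb : ¬ PA G Y t) :
    PA G Set.univ s ∧ ¬ PA G Set.univ t := by
  constructor
  · obtain ⟨M₁, h₁, hcov₁⟩ := id ha
    obtain ⟨M₂, h₂⟩ := MaxS_nonempty G Y
    refine ⟨M₁ ∪ M₂, ?_, ?_⟩
    · rw [h.MaxS_univ_AB ha hb]
      exact Or.inl ⟨(M₁, M₂), ⟨h₁, h₂⟩, rfl⟩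
    · rintro ⟨e, he | he, hs⟩
      · exact hcov₁ ⟨e, he, hs⟩
      · exact h.not_mem_Y_of_mem_X h.hsX (h₂.1.2 e he s hs)
  · rintro ⟨M, hM, hcov⟩
    rw [h.MaxS_univ_AB ha hb] at hM
    rcases hM with ⟨⟨M₁, M₂⟩, ⟨h₁, h₂⟩, rfl⟩ | ⟨⟨M₁, M₂⟩, ⟨h₁, h₂⟩, rfl⟩
    · have : Covers M₂ t := by
        by_contra hc
        exact hb ⟨M₂, h₂, hc⟩
      obtain ⟨e, he, ht⟩ := this
      exact hcov ⟨e, Or.inr he, ht⟩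
    · exact hcov ⟨s(s, t), Set.mem_insert _ _, by simp⟩

end Cases

end Split


/-! ### Sides of an edge in a tree -/

section TreeSides

open SimpleGraph

lemma induce_acyclic {G : SimpleGraph V} {S : Set V} (h : G.IsAcyclic) :
    (G.induce S).IsAcyclic := by
  intro v c hc
  have f : (G.induce S) ↪g G := SimpleGraph.Embedding.induce S
  exact h (c.map f.toHom)
    ((SimpleGraph.Walk.map_isCycle_iff_of_injective f.injective).mpr hc)

variable {G : SimpleGraph V} {s t : V}

lemma deleteEdges_swap (G : SimpleGraph V) (s t : V) :
    G.deleteEdges {Sym2.mk t s} = G.deleteEdges {Sym2.mk s t} := by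
  rw [Sym2.eq_swap]

lemma sideSet_swap_eq (G : SimpleGraph V) (s t : V) :
    sideSet G t s = {v | (G.deleteEdges {Sym2.mk s t}).Reachable t v} := by
  unfold sideSet
  rw [deleteEdges_swap]

lemma not_reachable_del (hT : G.IsAcyclic) (hst : G.Adj s t) :
    ¬ (G.deleteEdges {Sym2.mk s t}).Reachable s t := by
  have hb : G.IsBridge s(s, t) := (SimpleGraph.isAcyclic_iff_forall_adj_isBridge.mp hT) hst
  exact hb

lemma sides_disjoint (hT : G.IsAcyclic) (hst : G.Adj s t) :
    Disjoint (sideSet G s t) (sideSet G t s) := by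
  rw [Set.disjoint_left]
  intro v hv hv'
  rw [sideSet_swap_eq] at hv'
  exact not_reachable_del hT hst (hv.trans hv'.symm)

lemma sides_cover (hconn : G.Connected) (hst : G.Adj s t) :
    sideSet G s t ∪ sideSet G t s = Set.univ := by
  have key : ∀ (u v : V), G.Walk u v → u ∈ sideSet G s t ∪ sideSet G t s →
      v ∈ sideSet G s t ∪ sideSet G t s := by
    intro u v p
    induction p with
    | nil => exact id
    | @cons u x v h q ih =>
      intro hu
      apply ih
      by_cases he : s(u, x) = s(s, t)
      · rw [Sym2.eq_iff] at he
        rcases he with ⟨rfl, rfl⟩ | ⟨rfl, rfl⟩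
        · exact Or.inr (mem_sideSet_self G x u)
        · exact Or.inl (mem_sideSet_self G x u)
      · have hadj : (G.deleteEdges {Sym2.mk s t}).Adj u x := by
          rw [SimpleGraph.deleteEdges_adj]
          exact ⟨h, by simpa using he⟩
        rcases hu with hu | hu
        · exact Or.inl (hu.trans hadj.reachable)
        · rw [sideSet_swap_eq] at hu
          refine Or.inr ?_
          rw [sideSet_swap_eq]
          exact hu.trans hadj.reachable
  ext v
  simp only [Set.mem_univ, iff_true]
  obtain ⟨p⟩ := hconn s v
  exact key s v p (Or.inl (mem_sideSet_self G s t))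

lemma sides_cross (hT : G.IsAcyclic) (hst : G.Adj s t) :
    ∀ ⦃a b⦄, G.Adj a b → a ∈ sideSet G s t → b ∈ sideSet G t s → a = s ∧ b = t := by
  intro a b hab ha hb
  by_cases he : s(a, b) = s(s, t)
  · rw [Sym2.eq_iff] at he
    rcases he with ⟨rfl, rfl⟩ | ⟨rfl, rfl⟩
    · exact ⟨rfl, rfl⟩
    · exact absurd (mem_sideSet_self G a b)
        (fun hc => Set.disjoint_left.mp (sides_disjoint hT hst) ha hc)
  · have hadj : (G.deleteEdges {Sym2.mk s t}).Adj a b := by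
      rw [SimpleGraph.deleteEdges_adj]
      exact ⟨hab, by simpa using he⟩
    exact absurd (ha.trans hadj.reachable)
      (fun hc => Set.disjoint_left.mp (sides_disjoint hT hst) hc hb)

lemma tree_split (hT : G.IsTree) (hst : G.Adj s t) :
    Split G (sideSet G s t) (sideSet G t s) s t where
  adj := hst
  hsX := mem_sideSet_self G s t
  htY := mem_sideSet_self G t s
  disj := sides_disjoint hT.2 hst
  cover := sides_cover hT.1 hst
  cross := sides_cross hT.2 hst

/-- removing an edge with an endpoint outside `S` does not change the induced graph -/
lemma induce_deleteEdges_eq {S : Set V} {e : Sym2 V} {w : V} (hw : w ∈ e) (hwS : w ∉ S) :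
    (G.deleteEdges {e}).induce S = G.induce S := by
  ext a b
  simp only [SimpleGraph.comap_adj, Function.Embedding.coe_subtype,
    SimpleGraph.deleteEdges_adj, Set.mem_singleton_iff]
  constructor
  · rintro ⟨h, _⟩
    exact h
  · intro h
    refine ⟨h, fun hc => hwS ?_⟩
    rw [← hc] at hw
    rcases Sym2.mem_iff.mp hw with rfl | rfl
    · exact a.2
    · exact b.2

lemma sideGraph'_eq (hT : G.IsTree) (hst : G.Adj s t) :
    (G.deleteEdges {Sym2.mk s t}).induce (sideSet G s t) = G.induce (sideSet G s t) :=
  induce_deleteEdges_eq (by simp) (fun hc =>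
    Set.disjoint_left.mp (sides_disjoint hT.2 hst) hc (mem_sideSet_self G t s))

lemma sideGraphDel_eq (hT : G.IsTree) (hst : G.Adj s t) :
    (G.deleteEdges {Sym2.mk s t}).induce (sideSet G s t \ {s}) =
      G.induce (sideSet G s t \ {s}) :=
  induce_deleteEdges_eq (w := t) (by simp) (fun hc =>
    Set.disjoint_left.mp (sides_disjoint hT.2 hst) hc.1 (mem_sideSet_self G t s))

/-! connectivity of a side -/

lemma walk_support_mem {H : SimpleGraph V} {r : V} :
    ∀ {u v : V} (p : H.Walk u v), H.Reachable r u → ∀ w ∈ p.support, H.Reachable r w := by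
  intro u v p
  induction p with
  | nil =>
    intro hu w hw
    rw [SimpleGraph.Walk.support_nil, List.mem_singleton] at hw
    exact hw ▸ hu
  | @cons u x v h q ih =>
    intro hu w hw
    rw [SimpleGraph.Walk.support_cons, List.mem_cons] at hw
    rcases hw with rfl | hw
    · exact hu
    · exact ih (hu.trans h.reachable) w hw

lemma reachable_induce_of_walk {H : SimpleGraph V} {S : Set V} :
    ∀ {u v : V} (p : H.Walk u v) (hS : ∀ w ∈ p.support, w ∈ S),
    (H.induce S).Reachable
      ⟨u, hS u p.start_mem_support⟩ ⟨v, hS v p.end_mem_support⟩ := by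
  intro u v p
  induction p with
  | nil => intro _; rfl
  | @cons u x v h q ih =>
    intro hS
    have hx : x ∈ S := hS x (by simp)
    have hAdj : (H.induce S).Adj ⟨u, hS u (by simp)⟩ ⟨x, hx⟩ := h
    refine hAdj.reachable.trans ?_
    have := ih (fun w hw => hS w (by rw [SimpleGraph.Walk.support_cons]; exact List.mem_cons_of_mem _ hw))
    convert this using 2

lemma side_connected (hT : G.IsTree) (hst : G.Adj s t) :
    (G.induce (sideSet G s t)).Connected := by
  rw [← sideGraph'_eq hT hst]
  set H := G.deleteEdges {Sym2.mk s t} with hH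
  have hreach : ∀ v : sideSet G s t,
      (H.induce (sideSet G s t)).Reachable ⟨s, mem_sideSet_self G s t⟩ v := by
    rintro ⟨v, hv⟩
    obtain ⟨p⟩ := (hv : H.Reachable s v)
    have hsup : ∀ w ∈ p.support, w ∈ sideSet G s t :=
      fun w hw => walk_support_mem p (SimpleGraph.Reachable.refl s) w hw
    exact reachable_induce_of_walk p hsup
  have : Nonempty (sideSet G s t) := ⟨⟨s, mem_sideSet_self G s t⟩⟩
  exact SimpleGraph.Connected.mk (fun u v => (hreach u).symm.trans (hreach v))

lemma side_isTree (hT : G.IsTree) (hst : G.Adj s t) :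
    (G.induce (sideSet G s t)).IsTree :=
  ⟨side_connected hT hst, induce_acyclic hT.2⟩

/-! no edge of a tree joins two type-A vertices -/

lemma tree_edge_not_AA (hT : G.IsTree) (hst : G.Adj s t) :
    ¬ PA G Set.univ s ∨ ¬ PA G Set.univ t := by
  have hsp := tree_split hT hst
  by_cases ha : PA G (sideSet G s t) s <;> by_cases hb : PA G (sideSet G t s) t
  · exact Or.inl (hsp.not_PA_univ_AA ha hb).1
  · exact Or.inr (hsp.PA_univ_AB ha hb).2
  · exact Or.inl (hsp.symm.PA_univ_AB hb ha).2
  · exact Or.inl (hsp.not_PA_univ_BB ha hb).1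

lemma all_PA_subsingleton {W : Type} [Finite W] {H : SimpleGraph W} (hT : H.IsTree)
    (hall : ∀ v : W, PA H Set.univ v) : ∀ v w : W, v = w := by
  intro v w
  by_contra hne
  obtain ⟨p⟩ := hT.isConnected v w
  cases p with
  | nil => exact hne rfl
  | @cons u x v h q =>
    rcases tree_edge_not_AA hT h with hc | hc
    · exact hc (hall _)
    · exact hc (hall _)


/-! ### Identification of the side quantities -/

lemma sideM_eq (hT : G.IsTree) (hst : G.Adj s t) :
    sideM G s t = mS G (sideSet G s t) := by
  rw [sideM, sideGraph, sideGraph'_eq hT hst]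
  exact mm_induce G _

lemma sideMDel_eq (hT : G.IsTree) (hst : G.Adj s t) :
    sideMDel G s t = mS G (sideSet G s t \ {s}) := by
  rw [sideMDel, sideGraphDel_eq hT hst]
  exact mm_induce G _

lemma typeA_side (hT : G.IsTree) (hst : G.Adj s t) :
    TypeA (sideGraph G s t) (sideRoot G s t) ↔ PA G (sideSet G s t) s := by
  rw [sideGraph, sideRoot, sideGraph'_eq hT hst]
  exact typeA_induce G _ s (mem_sideSet_self G s t)

lemma mm_eq_mS_univ (G : SimpleGraph V) : mm G = mS G Set.univ := (mS_univ G).symm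

/-- Part 2 of Statement 13 : valid in every finite tree. -/
lemma tree_part2 (hT : G.IsTree) {s t : V} (hst : G.Adj s t)
    (hs : TypeA G s) (ht : TypeB G t) :
    TypeA (sideGraph G s t) (sideRoot G s t) ∧
    TypeB (sideGraph G t s) (sideRoot G t s) ∧
    mm G = sideM G s t * sideM G t s + sideMDel G s t * sideMDel G t s := by
  have hsp := tree_split hT hst
  rw [TypeA_iff_PA_univ] at hs
  rw [TypeB, TypeA_iff_PA_univ] at ht
  by_cases ha : PA G (sideSet G s t) s <;> by_cases hb : PA G (sideSet G t s) t
  · exact absurd hs (hsp.not_PA_univ_AA ha hb).1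
  · refine ⟨(typeA_side hT hst).mpr ha, ?_, ?_⟩
    · rw [TypeB, typeA_side hT hst.symm]
      exact hb
    · rw [mm_eq_mS_univ, hsp.mS_univ_AB ha hb, sideM_eq hT hst, sideM_eq hT hst.symm,
        sideMDel_eq hT hst, sideMDel_eq hT hst.symm]
  · exact absurd hs (hsp.symm.PA_univ_AB hb ha).2
  · exact absurd hs (hsp.not_PA_univ_BB ha hb).1

end TreeSides


/-! ### Invariance under isomorphism -/

section Iso

variable {W : Type} [Finite W] {G : SimpleGraph V} {H : SimpleGraph W}

lemma sym2_map_cancel {f : V → W} {g : W → V} (hfg : ∀ w, f (g w) = w) (e : Sym2 W) :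
    Sym2.map f (Sym2.map g e) = e := by
  induction e with
  | _ a b => simp [hfg]

lemma mem_sym2_map_inj {f : V → W} (hf : Function.Injective f) {v : V} {e : Sym2 V} :
    f v ∈ Sym2.map f e ↔ v ∈ e := by
  rw [Sym2.mem_map]
  constructor
  · rintro ⟨u, hu, hv⟩
    rwa [← hf hv]
  · intro hv
    exact ⟨v, hv, rfl⟩

lemma isMatchingSet_iso (φ : G ≃g H) {M : Set (Sym2 V)} (hM : IsMatchingSet G M) :
    IsMatchingSet H (Sym2.map φ '' M) := by
  constructor
  · rintro e ⟨e', he', rfl⟩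
    induction e' with
    | _ a b =>
      have := hM.1 he'
      rw [SimpleGraph.mem_edgeSet] at this
      rw [Sym2.map_pair_eq, SimpleGraph.mem_edgeSet]
      exact φ.map_adj_iff.mpr this
  · rintro e ⟨e', he', rfl⟩ f ⟨f', hf', rfl⟩ hne w ⟨hw1, hw2⟩
    have hne' : e' ≠ f' := fun hc => hne (by rw [hc])
    obtain ⟨u, hu, rfl⟩ := Sym2.mem_map.mp hw1
    rw [mem_sym2_map_inj φ.injective] at hw2
    exact hM.2 he' hf' hne' u ⟨hu, hw2⟩

lemma image_image_cancel {f : V → W} {g : W → V} (hfg : ∀ w, f (g w) = w)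
    (M : Set (Sym2 W)) : Sym2.map f '' (Sym2.map g '' M) = M := by
  rw [← Set.image_comp]
  have : (Sym2.map f ∘ Sym2.map g) = id := funext (sym2_map_cancel hfg)
  rw [this, Set.image_id]

lemma matchNum_iso (φ : G ≃g H) : matchNum G = matchNum H := by
  rw [matchNum, matchNum]
  congr 1
  ext n
  constructor
  · rintro ⟨M, hM, rfl⟩
    exact ⟨Sym2.map φ '' M, isMatchingSet_iso φ hM,
      Set.ncard_image_of_injective _ (Sym2.map.injective φ.injective)⟩
  · rintro ⟨M, hM, rfl⟩
    refine ⟨Sym2.map φ.symm '' M, isMatchingSet_iso φ.symm hM, ?_⟩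
    rw [Set.ncard_image_of_injective _ (Sym2.map.injective φ.symm.injective)]

lemma MaximumMatchings_iso (φ : G ≃g H) :
    MaximumMatchings H = (fun M => Sym2.map φ '' M) '' MaximumMatchings G := by
  ext M
  constructor
  · rintro ⟨hM, hc⟩
    refine ⟨Sym2.map φ.symm '' M, ⟨isMatchingSet_iso φ.symm hM, ?_⟩, image_image_cancel (fun w => φ.apply_symm_apply w) M⟩
    rw [Set.ncard_image_of_injective _ (Sym2.map.injective φ.symm.injective), hc,
      matchNum_iso φ]
  · rintro ⟨N, ⟨hN, hc⟩, rfl⟩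
    refine ⟨isMatchingSet_iso φ hN, ?_⟩
    rw [Set.ncard_image_of_injective _ (Sym2.map.injective φ.injective), hc, matchNum_iso φ]

lemma mm_iso (φ : G ≃g H) : mm G = mm H := by
  rw [mm, mm, MaximumMatchings_iso φ,
    Set.ncard_image_of_injective _
      (Set.image_injective.mpr (Sym2.map.injective φ.injective))]

lemma isTree_iso (φ : G ≃g H) (hT : G.IsTree) : H.IsTree := by
  constructor
  · have : Nonempty W := Nonempty.map φ (hT.isConnected.nonempty)
    refine SimpleGraph.Connected.mk (fun u v => ?_)
    obtain ⟨p⟩ := hT.isConnected (φ.symm u) (φ.symm v)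
    have := (p.map φ.toHom).reachable
    simpa using this
  · intro v c hc
    exact hT.IsAcyclic (c.map φ.symm.toHom)
      ((SimpleGraph.Walk.map_isCycle_iff_of_injective φ.symm.injective).mpr hc)

end Iso


/-! ### The star graph -/

section Star

def starG (n : ℕ) (h : 0 < n) : SimpleGraph (Fin n) where
  Adj a b := a ≠ b ∧ (a = ⟨0, h⟩ ∨ b = ⟨0, h⟩)
  symm := by
    constructor
    rintro a b ⟨h1, h2⟩
    exact ⟨h1.symm, h2.symm⟩
  loopless := ⟨fun a ha => ha.1 rfl⟩

variable {n : ℕ} (hn : 0 < n)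

lemma starG_connected (hn : 0 < n) : (starG n hn).Connected := by
  have : Nonempty (Fin n) := ⟨⟨0, hn⟩⟩
  refine SimpleGraph.Connected.mk (fun u v => ?_)
  have key : ∀ w : Fin n, (starG n hn).Reachable ⟨0, hn⟩ w := by
    intro w
    by_cases hw : w = ⟨0, hn⟩
    · rw [hw]
    · exact (SimpleGraph.Adj.reachable ⟨fun hc => hw hc.symm, Or.inl rfl⟩)
  exact (key u).symm.trans (key v)

lemma starG_acyclic (hn : 0 < n) : (starG n hn).IsAcyclic := by
  rw [SimpleGraph.isAcyclic_iff_forall_adj_isBridge]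
  intro a b hab hreach
  -- wlog the center is `a` or `b`
  have key : ∀ (c d : Fin n), c = ⟨0, hn⟩ → (starG n hn).Adj c d →
      ¬ ((starG n hn) \ SimpleGraph.fromEdgeSet {s(c, d)}).Reachable d c := by
    rintro c d rfl hcd ⟨p⟩
    cases p with
    | nil => exact hcd.ne rfl
    | @cons u w v h q =>
      rw [SimpleGraph.sdiff_adj] at h
      obtain ⟨h1, hnot⟩ := h
      have hd : d ≠ (⟨0, hn⟩ : Fin n) := fun hc => hcd.ne hc.symm
      have hw : w = (⟨0, hn⟩ : Fin n) := by
        rcases h1.2 with hc | hc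
        · exact absurd hc hd
        · exact hc
      apply hnot
      rw [SimpleGraph.fromEdgeSet_adj]
      refine ⟨?_, h1.ne⟩
      rw [hw, Sym2.eq_swap]
      rfl
  rcases hab.2 with hc | hc
  · exact key a b hc hab (Sym2.eq_swap ▸ hreach.symm) 
  · have hab' := hab.symm
    have hreach' : ((starG n hn) \ SimpleGraph.fromEdgeSet {s(b, a)}).Reachable a b := by
      rw [Sym2.eq_swap]
      exact hreach
    exact key b a hc hab' hreach'

lemma starG_isTree (hn : 0 < n) : (starG n hn).IsTree :=
  ⟨starG_connected hn, starG_acyclic hn⟩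

lemma starG_edge_form (hn : 0 < n) {e : Sym2 (Fin n)} (he : e ∈ (starG n hn).edgeSet) :
    ∃ x : Fin n, x ≠ ⟨0, hn⟩ ∧ e = s(⟨0, hn⟩, x) := by
  induction e with
  | _ a b =>
    rw [SimpleGraph.mem_edgeSet] at he
    rcases he.2 with hc | hc
    · exact ⟨b, fun h2 => he.1 (by rw [hc, h2]), by rw [hc]⟩
    · exact ⟨a, fun h2 => he.1 (by rw [hc, h2]), by rw [hc]; exact Sym2.eq_swap⟩

lemma starG_matching_ncard_le (hn : 0 < n) {M : Set (Sym2 (Fin n))}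
    (hM : IsMatchingSet (starG n hn) M) : M.ncard ≤ 1 := by
  rw [Set.ncard_le_one_iff_eq (M.toFinite)]
  rcases Set.eq_empty_or_nonempty M with h | ⟨e, he⟩
  · exact Or.inl h
  · right
    refine ⟨e, Set.eq_singleton_iff_unique_mem.mpr ⟨he, fun f hf => ?_⟩⟩
    by_contra hne
    obtain ⟨x, hx, rfl⟩ := starG_edge_form hn (hM.1 he)
    obtain ⟨y, hy, rfl⟩ := starG_edge_form hn (hM.1 hf)
    exact hM.2 hf he hne ⟨0, hn⟩ ⟨by simp, by simp⟩

lemma starG_matchNum (hn3 : 3 ≤ n) : matchNum (starG n (by omega)) = 1 := by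
  have hn : 0 < n := by omega
  apply le_antisymm
  · apply csSup_le
    · exact ⟨0, ∅, ⟨⟨Set.empty_subset _, Set.pairwise_empty _⟩, by simp⟩⟩
    · rintro m ⟨M, hM, rfl⟩
      exact starG_matching_ncard_le hn hM
  · have h1 : (⟨1, by omega⟩ : Fin n) ≠ ⟨0, hn⟩ := by
      intro hc
      have := congrArg Fin.val hc
      simp at this
    refine le_csSup ⟨1, ?_⟩ ⟨{s(⟨0, hn⟩, ⟨1, by omega⟩)}, ⟨⟨?_, ?_⟩, ?_⟩⟩
    · rintro m ⟨M, hM, rfl⟩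
      exact starG_matching_ncard_le hn hM
    · rintro e he
      rw [Set.mem_singleton_iff] at he
      subst he
      exact (SimpleGraph.mem_edgeSet _).mpr ⟨fun hc => h1 hc.symm, Or.inl rfl⟩
    · exact Set.pairwise_singleton _ _
    · simp

lemma starG_mm (hn3 : 3 ≤ n) : mm (starG n (by omega)) = n - 1 := by
  have hn : 0 < n := by omega
  have hmax : MaximumMatchings (starG n hn) =
      (fun x : Fin n => ({s(⟨0, hn⟩, x)} : Set (Sym2 (Fin n)))) '' {x | x ≠ ⟨0, hn⟩} := by
    ext M
    constructor
    · rintro ⟨hM, hc⟩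
      rw [starG_matchNum hn hn3, Set.ncard_eq_one] at hc
      obtain ⟨e, rfl⟩ := hc
      obtain ⟨x, hx, rfl⟩ := starG_edge_form hn (hM.1 (Set.mem_singleton e))
      exact ⟨x, hx, rfl⟩
    · rintro ⟨x, hx, rfl⟩
      refine ⟨⟨?_, Set.pairwise_singleton _ _⟩, ?_⟩
      · rintro e he
        rw [Set.mem_singleton_iff] at he
        subst he
        exact (SimpleGraph.mem_edgeSet _).mpr ⟨fun hc => hx hc.symm, Or.inl rfl⟩
      · rw [starG_matchNum hn hn3]
        simp
    
  rw [mm, hmax, Set.ncard_image_of_injOn]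
  · have : {x : Fin n | x ≠ ⟨0, hn⟩} = Set.univ \ {⟨0, hn⟩} := by
      ext x; simp
    rw [this, Set.ncard_diff (by simp) (Set.toFinite _), Set.ncard_univ, Set.ncard_singleton,
      Nat.card_eq_fintype_card, Fintype.card_fin]
  · intro x hx y hy hxy
    simp only [Set.singleton_eq_singleton_iff, Sym2.eq_iff] at hxy
    rcases hxy with ⟨-, h2⟩ | ⟨h1, h2⟩
    · exact h2
    · exact absurd h2 hx

end Star


/-! ### Acyclic graphs: leaves and unique perfect matchings -/

section Unique

lemma exists_leaf_s13 {G : SimpleGraph V} (hac : G.IsAcyclic) {a0 b0 : V} (h0 : G.Adj a0 b0) :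
    ∃ a b, G.Adj a b ∧ ∀ w, G.Adj a w → w = b := by
  classical
  have : Fintype V := Fintype.ofFinite V
  set N : Set ℕ := {n | ∃ (u v : V) (p : G.Walk u v), p.IsPath ∧ p.length = n} with hN
  have hne : (1 : ℕ) ∈ N := ⟨a0, b0, (SimpleGraph.Path.singleton h0).1,
    (SimpleGraph.Path.singleton h0).2, rfl⟩
  have hbdd : BddAbove N := by
    refine ⟨Fintype.card V, ?_⟩
    rintro n ⟨u, v, p, hp, rfl⟩
    exact le_of_lt hp.length_lt
  set m := sSup N with hm
  have hmem : m ∈ N := Nat.sSup_mem ⟨1, hne⟩ hbdd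
  have hm1 : 1 ≤ m := le_csSup hbdd hne
  obtain ⟨u, v, p, hp, hlen⟩ := hmem
  cases p with
  | nil => simp at hlen; omega
  | @cons u x v h q =>
    refine ⟨u, x, h, fun w hw => ?_⟩
    by_contra hwx
    have hq : q.IsPath ∧ u ∉ q.support := by
      rw [SimpleGraph.Walk.cons_isPath_iff] at hp
      exact hp
    by_cases hws : w ∈ q.support
    · -- build a cycle
      have hq' : (q.takeUntil w hws).IsPath := hq.1.takeUntil hws
      have hu' : u ∉ (q.takeUntil w hws).support :=
        fun hc => hq.2 (SimpleGraph.Walk.support_takeUntil_subset q hws hc)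
      have hr : (SimpleGraph.Walk.cons h (q.takeUntil w hws)).IsPath := by
        rw [SimpleGraph.Walk.cons_isPath_iff]
        exact ⟨hq', hu'⟩
      set r := SimpleGraph.Walk.cons h (q.takeUntil w hws) with hrdef
      have hcyc : (SimpleGraph.Walk.cons hw r.reverse).IsCycle := by
        rw [SimpleGraph.Walk.cons_isCycle_iff]
        refine ⟨hr.reverse, ?_⟩
        rw [SimpleGraph.Walk.edges_reverse, List.mem_reverse]
        rw [hrdef, SimpleGraph.Walk.edges_cons, List.mem_cons]
        rintro (hc | hc)
        · rw [Sym2.eq_iff] at hc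
          rcases hc with ⟨-, h2⟩ | ⟨h1, h2⟩
          · exact hwx h2
          · exact hw.ne h2.symm
        · exact hu' (SimpleGraph.Walk.fst_mem_support_of_mem_edges _ hc)
      exact hac _ hcyc
    · -- extend the path
      have hwp : w ∉ (SimpleGraph.Walk.cons h q).support := by
        rw [SimpleGraph.Walk.support_cons, List.mem_cons]
        rintro (rfl | hc)
        · exact hw.ne rfl
        · exact hws hc
      have hlong : (SimpleGraph.Walk.cons hw.symm (SimpleGraph.Walk.cons h q)).IsPath := by
        rw [SimpleGraph.Walk.cons_isPath_iff]
        exact ⟨hp, hwp⟩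
      have : m + 1 ∈ N := ⟨w, v, _, hlong, by
        rw [SimpleGraph.Walk.length_cons, hlen]⟩
      have := le_csSup hbdd this
      omega

lemma matching_edge_of_adjvert {G : SimpleGraph V} {M : Set (Sym2 V)}
    (hM : IsMatchingSet G M) {a b : V} (hleaf : ∀ w, G.Adj a w → w = b)
    (hcov : Covers M a) : s(a, b) ∈ M := by
  obtain ⟨e, he, ha⟩ := hcov
  have hedge := hM.1 he
  induction e with
  | _ c d =>
    rw [SimpleGraph.mem_edgeSet] at hedge
    rcases Sym2.mem_iff.mp ha with rfl | rfl
    · rwa [hleaf d hedge] at he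
    · have hcb := hleaf c hedge.symm
      subst hcb
      rwa [Sym2.eq_swap]

lemma unique_cover_matching :
    ∀ (n : ℕ) {V : Type} [Finite V], Nat.card V ≤ n →
    ∀ {G : SimpleGraph V}, G.IsAcyclic →
    ∀ {M M' : Set (Sym2 V)}, IsMatchingSet G M → IsMatchingSet G M' →
    (∀ v, Covers M v) → (∀ v, Covers M' v) → M = M' := by
  intro n
  induction n with
  | zero =>
    intro V _ hcard G hac M M' hM hM' hcov hcov'
    have h0 : Nat.card V = 0 := by omega
    have hemp : IsEmpty V := by
      rcases Nat.card_eq_zero.mp h0 with h | h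
      · exact h
      · exact absurd h (not_infinite_iff_finite.mpr ‹Finite V›)
    ext e
    obtain ⟨w, hw⟩ := sym2_exists_mem e
    exact (hemp.false w).elim
  | succ n ih =>
    intro V _ hcard G hac M M' hM hM' hcov hcov'
    rcases isEmpty_or_nonempty V with hemp | hne
    · ext e
      obtain ⟨w, hw⟩ := sym2_exists_mem e
      exact (hemp.false w).elim
    · obtain ⟨v0⟩ := hne
      obtain ⟨e0, he0, hv0⟩ := hcov v0
      have hedge := hM.1 he0
      have hadj : ∃ a0 b0, G.Adj a0 b0 := by
        induction e0 with
        | _ c d =>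
          rw [SimpleGraph.mem_edgeSet] at hedge
          exact ⟨c, d, hedge⟩
      obtain ⟨a0, b0, hab0⟩ := hadj
      obtain ⟨a, b, hab, hleaf⟩ := exists_leaf_s13 hac hab0
      have heM : s(a, b) ∈ M := matching_edge_of_adjvert hM hleaf (hcov a)
      have heM' : s(a, b) ∈ M' := matching_edge_of_adjvert hM' hleaf (hcov' a)
      set S : Set V := {x | x ≠ a ∧ x ≠ b} with hS
      -- the restrictions
      have key : ∀ {N : Set (Sym2 V)}, IsMatchingSet G N → s(a, b) ∈ N →
          N \ {s(a, b)} ∈ MSupp G S := by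
        intro N hN heN
        refine ⟨⟨fun f hf => hN.1 hf.1, hN.2.mono Set.diff_subset⟩, ?_⟩
        rintro f ⟨hf, hfe⟩ w hw
        constructor
        · rintro rfl
          exact hfe (matching_edge_unique hN hf heN hw (by simp))
        · rintro rfl
          exact hfe (matching_edge_unique hN hf heN hw (by simp))
      have hMS := key hM heM
      have hMS' := key hM' heM'
      obtain ⟨N1, hN1⟩ := mem_MSupp_range G S hMS
      obtain ⟨N2, hN2⟩ := mem_MSupp_range G S hMS'
      have hcard' : Nat.card ↥S ≤ n := by
        have h1 : Nat.card ↥S = S.ncard := Nat.card_coe_set_eq S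
        have h2 : S ⊆ Set.univ \ {a} := by
          rintro x ⟨hx1, _⟩
          exact ⟨trivial, hx1⟩
        have h3 : S.ncard ≤ (Set.univ \ ({a} : Set V)).ncard :=
          Set.ncard_le_ncard h2 (Set.toFinite _)
        have h4 : (Set.univ \ ({a} : Set V)).ncard = Nat.card V - 1 := by
          rw [Set.ncard_diff (by simp) (Set.toFinite _), Set.ncard_univ, Set.ncard_singleton]
        have hnee : Nonempty V := ⟨v0⟩
        have h5 : 1 ≤ Nat.card V := Nat.card_pos
        omega
      have hcovN : ∀ x : ↥S, Covers N1 x := by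
        rintro ⟨x, hx⟩
        obtain ⟨f, hf, hxf⟩ := hcov x
        have hfe : f ≠ s(a, b) := by
          rintro rfl
          rcases Sym2.mem_iff.mp hxf with rfl | rfl
          · exact hx.1 rfl
          · exact hx.2 rfl
        have : f ∈ Sym2.map (Subtype.val : S → V) '' N1 := by
          rw [hN1]; exact ⟨hf, hfe⟩
        have := (covers_liftE S N1 ⟨x, hx⟩).mp ⟨f, this, hxf⟩
        exact this
      have hcovN' : ∀ x : ↥S, Covers N2 x := by
        rintro ⟨x, hx⟩
        obtain ⟨f, hf, hxf⟩ := hcov' x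
        have hfe : f ≠ s(a, b) := by
          rintro rfl
          rcases Sym2.mem_iff.mp hxf with rfl | rfl
          · exact hx.1 rfl
          · exact hx.2 rfl
        have : f ∈ Sym2.map (Subtype.val : S → V) '' N2 := by
          rw [hN2]; exact ⟨hf, hfe⟩
        have := (covers_liftE S N2 ⟨x, hx⟩).mp ⟨f, this, hxf⟩
        exact this
      have hNN : N1 = N2 := by
        refine ih hcard' (induce_acyclic hac) ?_ ?_ hcovN hcovN'
        · exact (isMatchingSet_liftE_iff G S N1).mpr (hN1 ▸ hMS)
        · exact (isMatchingSet_liftE_iff G S N2).mpr (hN2 ▸ hMS')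
      have hdiff : M \ {s(a, b)} = M' \ {s(a, b)} := by
        rw [← hN1, ← hN2, hNN]
      ext f
      by_cases hfe : f = s(a, b)
      · subst hfe
        simp [heM, heM']
      · constructor
        · intro hf
          have : f ∈ M' \ {s(a, b)} := hdiff ▸ ⟨hf, hfe⟩
          exact this.1
        · intro hf
          have : f ∈ M \ {s(a, b)} := hdiff ▸ ⟨hf, hfe⟩
          exact this.1

lemma mm_eq_one_of_all_covers {G : SimpleGraph V} (hac : G.IsAcyclic)
    (hall : ∀ M ∈ MaximumMatchings G, ∀ v, Covers M v) : mm G = 1 := by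
  have hne : (MaximumMatchings G).Nonempty := by
    have := MaxS_nonempty G (Set.univ : Set V)
    rwa [MaxS_univ] at this
  obtain ⟨M₀, hM₀⟩ := hne
  have : MaximumMatchings G = {M₀} := by
    ext M
    constructor
    · intro hM
      exact unique_cover_matching (Nat.card V) le_rfl hac hM.1 hM₀.1
        (hall M hM) (hall M₀ hM₀)
    · rintro rfl
      exact hM₀
  rw [mm, this, Set.ncard_singleton]

end Unique


/-! ### The exchange construction -/

section Exchange

variable {G : SimpleGraph V} {s t u : V}

lemma exchange_graph (hT : G.IsTree) (hst : G.Adj s t) (hu : u ∈ sideSet G t s) :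
    ∃ G' : SimpleGraph V, G'.IsTree ∧ Split G' (sideSet G s t) (sideSet G t s) s u ∧
      (∀ a b, a ∈ sideSet G s t → b ∈ sideSet G s t → (G.Adj a b ↔ G'.Adj a b)) ∧
      (∀ a b, a ∈ sideSet G t s → b ∈ sideSet G t s → (G.Adj a b ↔ G'.Adj a b)) := by
  classical
  set X := sideSet G s t with hX
  set Y := sideSet G t s with hY
  have hsp := tree_split hT hst
  have hsu : s ≠ u := fun hc => Set.disjoint_left.mp hsp.disj (hc ▸ hsp.hsX) hu
  set G' := (G.deleteEdges {Sym2.mk s t}) ⊔ SimpleGraph.fromEdgeSet {s(s, u)} with hG'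
  have hne_of_eq : ∀ a b : V, s(a, b) = s(s, u) → a ≠ b := by
    intro a b hab
    rw [Sym2.eq_iff] at hab
    rcases hab with ⟨rfl, rfl⟩ | ⟨rfl, rfl⟩
    · exact hsu
    · exact hsu.symm
  have hadj' : ∀ a b, G'.Adj a b ↔ (G.Adj a b ∧ s(a, b) ≠ s(s, t)) ∨ s(a, b) = s(s, u) := by
    intro a b
    rw [hG', SimpleGraph.sup_adj, SimpleGraph.deleteEdges_adj, SimpleGraph.fromEdgeSet_adj]
    constructor
    · rintro (⟨h1, h2⟩ | ⟨h1, h2⟩)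
      · exact Or.inl ⟨h1, by simpa using h2⟩
      · exact Or.inr (by simpa using h1)
    · rintro (⟨h1, h2⟩ | h1)
      · exact Or.inl ⟨h1, by simpa using h2⟩
      · exact Or.inr ⟨by simpa using h1, hne_of_eq a b h1⟩
  have hadjsu : G'.Adj s u := (hadj' s u).mpr (Or.inr rfl)
  have hle : G.deleteEdges {Sym2.mk s t} ≤ G' := le_sup_left
  have hXreach : ∀ v ∈ X, (G.deleteEdges {Sym2.mk s t}).Reachable s v := fun v hv => hv
  have hYreach : ∀ v ∈ Y, (G.deleteEdges {Sym2.mk s t}).Reachable t v := by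
    intro v hv
    rw [hY, sideSet_swap_eq] at hv
    exact hv
  have hagreeX : ∀ a b, a ∈ X → b ∈ X → (G.Adj a b ↔ G'.Adj a b) := by
    intro a b ha hb
    rw [hadj']
    constructor
    · intro hab
      refine Or.inl ⟨hab, fun hc => ?_⟩
      have : t ∈ s(a, b) := by rw [hc]; simp
      rcases Sym2.mem_iff.mp this with rfl | rfl
      · exact Set.disjoint_left.mp hsp.disj ha hsp.htY
      · exact Set.disjoint_left.mp hsp.disj hb hsp.htY
    · rintro (⟨h1, _⟩ | h1)
      · exact h1
      · exfalso
        have : u ∈ s(a, b) := by rw [h1]; simp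
        rcases Sym2.mem_iff.mp this with rfl | rfl
        · exact Set.disjoint_left.mp hsp.disj ha hu
        · exact Set.disjoint_left.mp hsp.disj hb hu
  have hagreeY : ∀ a b, a ∈ Y → b ∈ Y → (G.Adj a b ↔ G'.Adj a b) := by
    intro a b ha hb
    rw [hadj']
    constructor
    · intro hab
      refine Or.inl ⟨hab, fun hc => ?_⟩
      have : s ∈ s(a, b) := by rw [hc]; simp
      rcases Sym2.mem_iff.mp this with rfl | rfl
      · exact Set.disjoint_left.mp hsp.disj hsp.hsX ha
      · exact Set.disjoint_left.mp hsp.disj hsp.hsX hb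
    · rintro (⟨h1, _⟩ | h1)
      · exact h1
      · exfalso
        have : s ∈ s(a, b) := by rw [h1]; simp
        rcases Sym2.mem_iff.mp this with rfl | rfl
        · exact Set.disjoint_left.mp hsp.disj hsp.hsX ha
        · exact Set.disjoint_left.mp hsp.disj hsp.hsX hb
  -- connectivity
  have hreach' : ∀ v : V, G'.Reachable s v := by
    intro v
    rcases hsp.mem_or v with hv | hv
    · exact (hXreach v hv).mono hle
    · have h1 := hYreach u hu
      have h2 := hYreach v hv
      exact hadjsu.reachable.trans (((h1.symm.trans h2)).mono hle)
  have hconn' : G'.Connected := by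
    have : Nonempty V := ⟨s⟩
    exact SimpleGraph.Connected.mk (fun a b => (hreach' a).symm.trans (hreach' b))
  -- acyclicity
  have hacy' : G'.IsAcyclic := by
    have hbr : G'.IsBridge s(s, u) := by
      rw [SimpleGraph.isBridge_iff]
      intro hreach
      have hle2 : G' \ SimpleGraph.fromEdgeSet {s(s, u)} ≤ G.deleteEdges {Sym2.mk s t} := by
        intro a b hab
        rw [SimpleGraph.sdiff_adj] at hab
        obtain ⟨h1, h2⟩ := hab
        rcases (hadj' a b).mp h1 with ⟨h3, h4⟩ | h3
        · rw [SimpleGraph.deleteEdges_adj]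
          exact ⟨h3, by simpa using h4⟩
        · exfalso
          apply h2
          rw [SimpleGraph.fromEdgeSet_adj]
          exact ⟨by simpa using h3, h1.ne⟩
      have : u ∈ X := hreach.mono hle2
      exact Set.disjoint_left.mp hsp.disj this hu
    intro v c hc
    by_cases he : s(s, u) ∈ c.edges
    · rw [SimpleGraph.isBridge_iff_forall_cycle_notMem hadjsu] at hbr
      exact hbr c hc he
    · have hsub : ∀ e ∈ c.edges, e ∈ (G.deleteEdges {Sym2.mk s t}).edgeSet := by
        intro e hec
        have hee := c.edges_subset_edgeSet hec
        rw [hG', SimpleGraph.edgeSet_sup] at hee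
        rcases hee with hee | hee
        · exact hee
        · rw [SimpleGraph.edgeSet_fromEdgeSet] at hee
          exact absurd (hee.1 : e ∈ ({s(s, u)} : Set (Sym2 V))) (fun hc => he (hc ▸ hec))
      have hc2 : (c.transfer _ hsub).IsCycle := hc.transfer hsub
      have hc3 := hc2.mapLe (SimpleGraph.deleteEdges_le {Sym2.mk s t})
      exact hT.2 _ hc3
  have hcross' : ∀ ⦃a b⦄, G'.Adj a b → a ∈ X → b ∈ Y → a = s ∧ b = u := by
    intro a b hab ha hb
    rcases (hadj' a b).mp hab with ⟨h1, h2⟩ | h1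
    · obtain ⟨rfl, rfl⟩ := hsp.cross h1 ha hb
      exact absurd rfl h2
    · rw [Sym2.eq_iff] at h1
      rcases h1 with ⟨rfl, rfl⟩ | ⟨rfl, rfl⟩
      · exact ⟨rfl, rfl⟩
      · exact absurd ha (fun hc => Set.disjoint_left.mp hsp.disj hc hu)
  exact ⟨G', ⟨hconn', hacy'⟩, ⟨hadjsu, hsp.hsX, hu, hsp.disj, hsp.cover, hcross'⟩,
    hagreeX, hagreeY⟩


/-- the exchange strictly increases the number of maximum matchings -/
lemma mm_lt_exchange (hT : G.IsTree) (hst : G.Adj s t) (hu : u ∈ sideSet G t s)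
    (hcase :
      (PA G (sideSet G s t) s ∧ PA G (sideSet G t s) t ∧ ¬ PA G (sideSet G t s) u) ∨
      (¬ PA G (sideSet G s t) s ∧ ¬ PA G (sideSet G t s) t ∧ PA G (sideSet G t s) u)) :
    ∃ G' : SimpleGraph V, G'.IsTree ∧ mm G < mm G' := by
  classical
  set X := sideSet G s t with hX
  set Y := sideSet G t s with hY
  have hsp := tree_split hT hst
  obtain ⟨G', hT', hsp', hagX, hagY⟩ := exchange_graph hT hst hu
  refine ⟨G', hT', ?_⟩
  have cX : mS G X = mS G' X := mS_congr hagX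
  have cX' : mS G (X \ {s}) = mS G' (X \ {s}) :=
    mS_congr (fun a b ha hb => hagX a b ha.1 hb.1)
  have cY : mS G Y = mS G' Y := mS_congr hagY
  have cY' : mS G (Y \ {u}) = mS G' (Y \ {u}) :=
    mS_congr (fun a b ha hb => hagY a b ha.1 hb.1)
  have pX : PA G X s ↔ PA G' X s := PA_congr s hagX
  have pY : PA G Y u ↔ PA G' Y u := PA_congr u hagY
  have posX := mS_pos G (X \ {s})
  have posY := mS_pos G (Y \ {u})
  rcases hcase with ⟨ha, hb, hbu⟩ | ⟨ha, hb, hau⟩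
  · -- case (A,A): `mm G = mS X' * mS Y'`, G' is (A,B)
    have e1 : mm G = mS G (X \ {s}) * mS G (Y \ {t}) := by
      rw [mm_eq_mS_univ, hsp.mS_univ_AA ha hb]
    have e2 : mm G' = mS G X * mS G Y + mS G (X \ {s}) * mS G (Y \ {u}) := by
      rw [mm_eq_mS_univ, hsp'.mS_univ_AB (pX.mp ha) (fun hc => hbu (pY.mpr hc)), ← cX, ← cY,
        ← cX', ← cY']
    have b1 : mS G (X \ {s}) ≤ mS G X := mS_del_le_of_PA ha
    have b2 : mS G (Y \ {t}) ≤ mS G Y := mS_del_le_of_PA hb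
    have b3 : mS G (X \ {s}) * mS G (Y \ {t}) ≤ mS G X * mS G Y := Nat.mul_le_mul b1 b2
    have b4 : 1 ≤ mS G (X \ {s}) * mS G (Y \ {u}) := Nat.one_le_iff_ne_zero.mpr
      (Nat.mul_ne_zero (by omega) (by omega))
    omega
  · -- case (B,B): `mm G = mS X * mS Y`, G' is (B,A)
    have e1 : mm G = mS G X * mS G Y := by
      rw [mm_eq_mS_univ, hsp.mS_univ_BB ha hb]
    have e2 : mm G' = mS G Y * mS G X + mS G (Y \ {u}) * mS G (X \ {s}) := by
      rw [mm_eq_mS_univ, hsp'.symm.mS_univ_AB (pY.mp hau) (fun hc => ha (pX.mpr hc)), ← cX,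
        ← cY, ← cX', ← cY']
    have b4 : 1 ≤ mS G (Y \ {u}) * mS G (X \ {s}) := Nat.one_le_iff_ne_zero.mpr
      (Nat.mul_ne_zero (by omega) (by omega))
    have : mS G Y * mS G X = mS G X * mS G Y := Nat.mul_comm _ _
    omega

end Exchange

/-! ### all type-A sides are singletons -/

section Sing

variable {G : SimpleGraph V} {s t : V}

lemma side_all_PA_eq (hT : G.IsTree) (hst : G.Adj s t)
    (hall : ∀ u ∈ sideSet G t s, PA G (sideSet G t s) u) :
    ∀ u ∈ sideSet G t s, u = t := by
  have hTree : (G.induce (sideSet G t s)).IsTree := side_isTree hT hst.symm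
  have hsub := all_PA_subsingleton hTree (fun v => by
    rw [← TypeA_iff_PA_univ]
    have h1 : TypeA (G.induce (sideSet G t s)) ⟨v.1, v.2⟩ ↔ PA G (sideSet G t s) v.1 :=
      typeA_induce G _ v.1 v.2
    exact h1.mpr (hall v.1 v.2))
  intro u hu
  exact congrArg Subtype.val (hsub ⟨u, hu⟩ ⟨t, mem_sideSet_self G t s⟩)

end Sing

/-! ### Part 1 of Statement 13 -/

section Part1

variable {V : Type} [Fintype V]

lemma mm_le_of_optimal {G : SimpleGraph V} (hopt : OptimalTree G)
    {G' : SimpleGraph V} (hT' : G'.IsTree) : mm G' ≤ mm G := by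
  classical
  have e : V ≃ Fin (Fintype.card V) := Fintype.equivFin V
  have φ := SimpleGraph.Iso.map e G'
  have := hopt.2 (SimpleGraph.map e.toEmbedding G') (isTree_iso φ hT')
  exact (mm_iso φ).trans_le this

lemma part1 {G : SimpleGraph V} (hopt : OptimalTree G) (h3 : 3 ≤ Fintype.card V)
    {s t : V} (hst : G.Adj s t) :
    (TypeA G s ∧ TypeB G t) ∨ (TypeB G s ∧ TypeA G t) := by
  classical
  have hT := hopt.1
  have hsp := tree_split hT hst
  set X := sideSet G s t with hX
  set Y := sideSet G t s with hY
  by_cases ha : PA G X s <;> by_cases hb : PA G Y t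
  · -- components (A,A) : contradiction with optimality
    exfalso
    by_cases hbu : ∃ u ∈ Y, ¬ PA G Y u
    · obtain ⟨u, hu, hu2⟩ := hbu
      obtain ⟨G', hT', hlt⟩ := mm_lt_exchange hT hst hu (Or.inl ⟨ha, hb, hu2⟩)
      exact absurd (mm_le_of_optimal hopt hT') (by omega)
    · by_cases hau : ∃ u ∈ X, ¬ PA G X u
      · obtain ⟨u, hu, hu2⟩ := hau
        obtain ⟨G', hT', hlt⟩ := mm_lt_exchange hT hst.symm hu (Or.inl ⟨hb, ha, hu2⟩)
        exact absurd (mm_le_of_optimal hopt hT') (by omega)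
      · -- both sides all type A : both singletons, so |V| ≤ 2
        push_neg at hbu hau
        have hYs := side_all_PA_eq hT hst hbu
        have hXs := side_all_PA_eq hT hst.symm hau
        have hsub : (Set.univ : Set V) ⊆ {s, t} := by
          intro v _
          rcases hsp.mem_or v with hv | hv
          · exact Or.inl (hXs v hv)
          · exact Or.inr (hYs v hv)
        have h1 : (Set.univ : Set V).ncard ≤ ({s, t} : Set V).ncard :=
          Set.ncard_le_ncard hsub (Set.toFinite _)
        have h2 : ({s, t} : Set V).ncard ≤ 2 := by
          refine le_trans (Set.ncard_insert_le s {t}) ?_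
          rw [Set.ncard_singleton]
        have h3' : (Set.univ : Set V).ncard = Fintype.card V := by
          rw [Set.ncard_univ, Nat.card_eq_fintype_card]
        omega
  · -- components (A,B) : edge of type (A, B)
    refine Or.inl ⟨?_, ?_⟩
    · rw [TypeA_iff_PA_univ]
      exact (hsp.PA_univ_AB ha hb).1
    · rw [TypeB, TypeA_iff_PA_univ]
      exact (hsp.PA_univ_AB ha hb).2
  · -- components (B,A) : edge of type (B, A)
    refine Or.inr ⟨?_, ?_⟩
    · rw [TypeB, TypeA_iff_PA_univ]
      exact (hsp.symm.PA_univ_AB hb ha).2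
    · rw [TypeA_iff_PA_univ]
      exact (hsp.symm.PA_univ_AB hb ha).1
  · -- components (B,B) : contradiction with optimality
    exfalso
    by_cases hbu : ∃ u ∈ Y, PA G Y u
    · obtain ⟨u, hu, hu2⟩ := hbu
      obtain ⟨G', hT', hlt⟩ := mm_lt_exchange hT hst hu (Or.inr ⟨ha, hb, hu2⟩)
      exact absurd (mm_le_of_optimal hopt hT') (by omega)
    · by_cases hau : ∃ u ∈ X, PA G X u
      · obtain ⟨u, hu, hu2⟩ := hau
        obtain ⟨G', hT', hlt⟩ := mm_lt_exchange hT hst.symm hu (Or.inr ⟨hb, ha, hu2⟩)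
        exact absurd (mm_le_of_optimal hopt hT') (by omega)
      · -- all vertices are of type B : unique maximum matching, beaten by the star
        push_neg at hbu hau
        have hall : ∀ M ∈ MaximumMatchings G, ∀ v, Covers M v := by
          intro M hM v
          rw [← MaxS_univ, hsp.MaxS_univ_BB ha hb] at hM
          obtain ⟨⟨M₁, M₂⟩, ⟨h₁, h₂⟩, rfl⟩ := hM
          dsimp only at h₁ h₂ ⊢
          rcases hsp.mem_or v with hv | hv
          · have : Covers M₁ v := by
              by_contra hc
              exact hau v hv ⟨M₁, h₁, hc⟩
            obtain ⟨e, he, hve⟩ := this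
            exact ⟨e, Or.inl he, hve⟩
          · have : Covers M₂ v := by
              by_contra hc
              exact hbu v hv ⟨M₂, h₂, hc⟩
            obtain ⟨e, he, hve⟩ := this
            exact ⟨e, Or.inr he, hve⟩
        have h1 : mm G = 1 := mm_eq_one_of_all_covers hT.2 hall
        have hstar := hopt.2 (starG (Fintype.card V) (by omega)) (starG_isTree (by omega))
        rw [starG_mm (by omega) h3] at hstar
        omega

end Part1


/-- in an optimal tree of order at least 3, every edge joins a vertex of
type A to a vertex of type B; moreover, for an edge `st` with `s` of type A and `t` of
type B, `s` is of type A in its component `T_s` of `T − st`, `t` is of type B in `T_t`,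
and `m(T) = m(T_s)m(T_t) + m(T_s − s)m(T_t − t)`. -/
theorem stmt_13 {V : Type} [Fintype V] (G : SimpleGraph V) (hopt : OptimalTree G)
    (h3 : 3 ≤ Fintype.card V) :
    (∀ s t : V, G.Adj s t → ((TypeA G s ∧ TypeB G t) ∨ (TypeB G s ∧ TypeA G t))) ∧
    (∀ s t : V, G.Adj s t → TypeA G s → TypeB G t →
      TypeA (sideGraph G s t) (sideRoot G s t) ∧
      TypeB (sideGraph G t s) (sideRoot G t s) ∧
      mm G = sideM G s t * sideM G t s + sideMDel G s t * sideMDel G t s) := by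
  constructor
  · intro s t hst
    exact part1 hopt h3 hst
  · intro s t hst hs ht
    exact tree_part2 hopt.1 hst hs ht

end PaperMM
end
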